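/- arXiv:1312.0036 — 6 statements merged into one kernel-verified Lean document; each statement's English description precedes it below -/
import Mathlib

section
/- Let n = 2^d. The number of inputs X ∈ {0,1}ⁿ such that T_d(X) = Par(X) is exactly 2^{n−1} + 1 if d is even, and exactly 2^{n−1} − 1 if d is odd. -/
/-- The parity (XOR) of the bits of `X ∈ {0,1}ⁿ`: `true` iff the Hamming weight is odd. -/
def parity {n : ℕ} (X : Fin n → Bool) : Bool :=
  decide ((Finset.univ.filter (fun i => X i = true)).card % 2 = 1)

/-- The complete binary AND/OR tree `T_d : {0,1}^{2^d} → {0,1}`: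
`T_0(x) = x`; for `d > 0`, the root is an AND gate if `d` is odd and an OR gate
if `d` is even, applied to the two half-trees `T_{d-1}`. -/
def andOrTree : (d : ℕ) → (Fin (2 ^ d) → Bool) → Bool
  | 0, X => X ⟨0, by norm_num⟩
  | d + 1, X =>
    let L := andOrTree d (fun i =>
      X (Fin.castLE (Nat.pow_le_pow_right (by norm_num) (Nat.le_succ d)) i))
    let R := andOrTree d (fun i =>
      X ⟨2 ^ d + i.val, by have := i.isLt; rw [pow_succ]; omega⟩)
    if (d + 1) % 2 = 1 then L && R else L || R

namespace AOT

lemma pow_split (d : ℕ) : 2^(d+1) = 2^d + 2^d := by rw [pow_succ]; ring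

def lh {d : ℕ} (X : Fin (2^(d+1)) → Bool) : Fin (2^d) → Bool :=
  fun i => X (Fin.castLE (Nat.pow_le_pow_right (by norm_num) (Nat.le_succ d)) i)

def rh {d : ℕ} (X : Fin (2^(d+1)) → Bool) : Fin (2^d) → Bool :=
  fun i => X ⟨2 ^ d + i.val, by have := i.isLt; rw [pow_succ]; omega⟩

lemma tree_succ (d : ℕ) (X : Fin (2^(d+1)) → Bool) :
    andOrTree (d+1) X = if (d+1) % 2 = 1 then andOrTree d (lh X) && andOrTree d (rh X)
      else andOrTree d (lh X) || andOrTree d (rh X) := rfl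

def glue {d : ℕ} (L R : Fin (2^d) → Bool) : Fin (2^(d+1)) → Bool :=
  fun i => if h : i.val < 2^d then L ⟨i.val, h⟩
    else R ⟨i.val - 2^d, by have h1 := i.isLt; have h2 := pow_split d; omega⟩

lemma lh_glue {d : ℕ} (L R : Fin (2^d) → Bool) : lh (glue L R) = L := by
  funext i; simp only [lh, glue, Fin.castLE]; rw [dif_pos i.isLt]

lemma rh_glue {d : ℕ} (L R : Fin (2^d) → Bool) : rh (glue L R) = R := by
  funext i
  simp only [rh, glue]
  rw [dif_neg (by omega)]
  congr 1
  exact Fin.ext (by simp)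

lemma glue_lh_rh {d : ℕ} (X : Fin (2^(d+1)) → Bool) : glue (lh X) (rh X) = X := by
  funext i
  simp only [glue, lh, rh]
  by_cases h : i.val < 2^d
  · rw [dif_pos h]; exact congrArg X (Fin.ext rfl)
  · rw [dif_neg h]; congr 1; exact Fin.ext (by simp; omega)

lemma split_card {d : ℕ} (p q : (Fin (2^d) → Bool) → Prop) [DecidablePred p] [DecidablePred q] :
    (Finset.univ.filter (fun X : Fin (2^(d+1)) → Bool => p (lh X) ∧ q (rh X))).card
      = (Finset.univ.filter p).card * (Finset.univ.filter q).card := by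
  rw [← Finset.card_product, ← Finset.filter_product]
  apply Finset.card_bij' (fun X _ => (lh X, rh X)) (fun Y _ => glue Y.1 Y.2)
  · intro X hX
    simp only [Finset.mem_filter, Finset.mem_univ, true_and] at hX ⊢
    exact ⟨Finset.mem_product.2 ⟨Finset.mem_univ _, Finset.mem_univ _⟩, hX⟩
  · intro Y hY
    simp only [Finset.mem_filter, lh_glue, rh_glue, Finset.mem_univ, true_and] at hY ⊢
    exact hY.2
  · intro X _; exact glue_lh_rh X
  · intro Y _; simp [lh_glue, rh_glue]

lemma parity_add (x y : ℕ) :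
    decide ((x + y) % 2 = 1) = xor (decide (x % 2 = 1)) (decide (y % 2 = 1)) := by
  rcases Nat.mod_two_eq_zero_or_one x with hx | hx <;>
    rcases Nat.mod_two_eq_zero_or_one y with hy | hy <;>
      simp [Nat.add_mod, hx, hy]

lemma parity_succ {d : ℕ} (X : Fin (2^(d+1)) → Bool) :
    parity X = xor (parity (lh X)) (parity (rh X)) := by
  have key : (Finset.univ.filter (fun i => X i = true)).card
      = (Finset.univ.filter (fun i => lh X i = true)).card
        + (Finset.univ.filter (fun i => rh X i = true)).card := by
    rw [Finset.card_filter, Finset.card_filter, Finset.card_filter]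
    have h2 : 2^d + 2^d = 2^(d+1) := (pow_split d).symm
    rw [← Fin.sum_congr' (fun i => if X i = true then (1:ℕ) else 0) h2, Fin.sum_univ_add]
    have e1 : ∀ i : Fin (2^d), Fin.cast h2 (Fin.castAdd (2^d) i)
        = Fin.castLE (Nat.pow_le_pow_right (by norm_num) (Nat.le_succ d)) i :=
      fun i => Fin.ext rfl
    have e2 : ∀ i : Fin (2^d), Fin.cast h2 (Fin.natAdd (2^d) i)
        = (⟨2 ^ d + i.val, by have := i.isLt; rw [pow_succ]; omega⟩ : Fin (2^(d+1))) :=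
      fun i => Fin.ext rfl
    simp only [e1, e2]
    rfl
  unfold parity
  rw [key, parity_add]

def cnt (d : ℕ) (t p : Bool) : ℕ :=
  (Finset.univ.filter (fun X : Fin (2^d) → Bool => andOrTree d X = t ∧ parity X = p)).card

lemma cnt_succ (d : ℕ) (t p : Bool) :
    cnt (d+1) t p = ∑ α : Bool × Bool, ∑ β : Bool × Bool,
      if ((if (d+1) % 2 = 1 then α.1 && β.1 else α.1 || β.1) = t ∧ xor α.2 β.2 = p)
      then cnt d α.1 α.2 * cnt d β.1 β.2 else 0 := by
  classical
  unfold cnt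
  have hrw : (Finset.univ.filter
      (fun X : Fin (2^(d+1)) → Bool => andOrTree (d+1) X = t ∧ parity X = p))
      = Finset.univ.filter (fun X =>
        ((if (d+1) % 2 = 1 then andOrTree d (lh X) && andOrTree d (rh X)
          else andOrTree d (lh X) || andOrTree d (rh X)) = t
          ∧ xor (parity (lh X)) (parity (rh X)) = p)) := by
    apply Finset.filter_congr; intro X _
    rw [tree_succ, parity_succ]
  rw [hrw]
  rw [Finset.card_eq_sum_card_fiberwise (f := fun X : Fin (2^(d+1)) → Bool =>
      ((andOrTree d (lh X), parity (lh X)), (andOrTree d (rh X), parity (rh X))))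
    (t := (Finset.univ : Finset ((Bool × Bool) × (Bool × Bool)))) (fun x _ => Finset.mem_univ _)]
  rw [Fintype.sum_prod_type]
  apply Finset.sum_congr rfl
  intro α _
  apply Finset.sum_congr rfl
  intro β _
  obtain ⟨a1, a2⟩ := α
  obtain ⟨b1, b2⟩ := β
  rw [Finset.filter_filter]
  by_cases hc : ((if (d+1) % 2 = 1 then a1 && b1 else a1 || b1) = t ∧ xor a2 b2 = p)
  · rw [if_pos hc]
    have heq : (Finset.univ.filter fun X : Fin (2^(d+1)) → Bool =>
        ((if (d+1) % 2 = 1 then andOrTree d (lh X) && andOrTree d (rh X)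
          else andOrTree d (lh X) || andOrTree d (rh X)) = t
          ∧ xor (parity (lh X)) (parity (rh X)) = p)
        ∧ ((andOrTree d (lh X), parity (lh X)), (andOrTree d (rh X), parity (rh X)))
            = ((a1, a2), (b1, b2)))
        = Finset.univ.filter (fun X =>
          (fun Y => andOrTree d Y = a1 ∧ parity Y = a2) (lh X)
          ∧ (fun Y => andOrTree d Y = b1 ∧ parity Y = b2) (rh X)) := by
      apply Finset.filter_congr; intro X _
      simp only [Prod.mk.injEq]
      constructor
      · exact fun h => h.2
      · intro h
        exact ⟨by rw [h.1.1, h.1.2, h.2.1, h.2.2]; exact hc, h⟩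
    rw [heq]
    exact split_card (fun Y => andOrTree d Y = a1 ∧ parity Y = a2)
      (fun Y => andOrTree d Y = b1 ∧ parity Y = b2)
  · rw [if_neg hc]
    rw [Finset.card_eq_zero, Finset.filter_eq_empty_iff]
    intro X _
    rintro ⟨hp, hf⟩
    apply hc
    simp only [Prod.mk.injEq] at hf
    obtain ⟨⟨h1, h2⟩, h3, h4⟩ := hf
    rw [← h1, ← h2, ← h3, ← h4]
    exact hp

lemma cnt_zero : cnt 0 true true = 1 ∧ cnt 0 true false = 0
    ∧ cnt 0 false true = 0 ∧ cnt 0 false false = 1 := by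
  refine ⟨?_, ?_, ?_, ?_⟩ <;> decide

lemma key (d : ℕ) :
    cnt d true true + cnt d false true = 2^(2^d - 1) ∧
    cnt d true false + cnt d false false = 2^(2^d - 1) ∧
    ((cnt d true true : ℤ) - cnt d true false = if Even d then 1 else -1) := by
  induction d with
  | zero =>
    obtain ⟨z1, z2, z3, z4⟩ := cnt_zero
    refine ⟨?_, ?_, ?_⟩ <;> simp [z1, z2, z3, z4]
  | succ d ih =>
    obtain ⟨h1, h2, h3⟩ := ih
    have hpow1 : 1 ≤ 2^d := Nat.one_le_two_pow
    have hsplit : 2^(d+1) - 1 = (2^d - 1) + (2^d - 1) + 1 := by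
      have := pow_split d; omega
    have hP : (2:ℕ)^(2^(d+1) - 1) = 2 * (2^(2^d-1) * 2^(2^d-1)) := by
      rw [hsplit, pow_add, pow_add, pow_one]; ring
    zify at h1 h2
    rcases Nat.even_or_odd d with hd | hd
    · have hmod : (d+1) % 2 = 1 := by
        have := Nat.even_iff.mp hd; omega
      rw [if_pos hd] at h3
      refine ⟨?_, ?_, ?_⟩
      · rw [cnt_succ, cnt_succ, hP]
        simp only [hmod, Fintype.sum_prod_type, Fintype.sum_bool]
        simp only [reduceIte]
        simp
        zify
        linear_combination (2*((cnt d true false : ℤ) + cnt d false false))*h1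
          + (2*(2:ℤ)^(2^d-1))*h2
      · rw [cnt_succ, cnt_succ, hP]
        simp only [hmod, Fintype.sum_prod_type, Fintype.sum_bool]
        simp only [reduceIte]
        simp
        zify
        linear_combination ((cnt d true true : ℤ) + cnt d false true + (2:ℤ)^(2^d-1))*h1
          + ((cnt d true false : ℤ) + cnt d false false + (2:ℤ)^(2^d-1))*h2
      · rw [cnt_succ, cnt_succ, if_neg (by simp [Nat.even_add_one, hd])]
        simp only [hmod, Fintype.sum_prod_type, Fintype.sum_bool]
        simp only [reduceIte]
        simp
        push_cast
        linear_combination (-((cnt d true true : ℤ) - cnt d true false + 1))*h3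
    · have hmod : ¬ ((d+1) % 2 = 1) := by
        have := Nat.odd_iff.mp hd; omega
      rw [if_neg (Nat.not_even_iff_odd.mpr hd)] at h3
      refine ⟨?_, ?_, ?_⟩
      · rw [cnt_succ, cnt_succ, hP]
        simp only [hmod, Fintype.sum_prod_type, Fintype.sum_bool]
        simp only [reduceIte]
        simp
        zify
        linear_combination (2*((cnt d true false : ℤ) + cnt d false false))*h1
          + (2*(2:ℤ)^(2^d-1))*h2
      · rw [cnt_succ, cnt_succ, hP]
        simp only [hmod, Fintype.sum_prod_type, Fintype.sum_bool]
        simp only [reduceIte]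
        simp
        zify
        linear_combination ((cnt d true true : ℤ) + cnt d false true + (2:ℤ)^(2^d-1))*h1
          + ((cnt d true false : ℤ) + cnt d false false + (2:ℤ)^(2^d-1))*h2
      · rw [cnt_succ, cnt_succ, if_pos (by simp [Nat.even_add_one, Nat.not_even_iff_odd.mpr hd])]
        simp only [hmod, Fintype.sum_prod_type, Fintype.sum_bool]
        simp only [reduceIte]
        simp
        push_cast
        linear_combination (2*(cnt d true false : ℤ) - 2*cnt d true true)*h1
          + (2*(cnt d true true : ℤ) - 2*cnt d true false)*h2
          + ((cnt d true true : ℤ) - cnt d true false - 1)*h3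

lemma agree_card (d : ℕ) :
    (Finset.univ.filter
        (fun X : Fin (2 ^ d) → Bool => andOrTree d X = parity X)).card
      = cnt d true true + cnt d false false := by
  have hu : Finset.univ.filter (fun X : Fin (2 ^ d) → Bool => andOrTree d X = parity X)
      = Finset.univ.filter (fun X => andOrTree d X = true ∧ parity X = true)
        ∪ Finset.univ.filter (fun X => andOrTree d X = false ∧ parity X = false) := by
    ext X
    simp only [Finset.mem_union, Finset.mem_filter, Finset.mem_univ, true_and]
    cases hT : andOrTree d X <;> cases hPp : parity X <;> simp
  rw [hu, Finset.card_union_of_disjoint]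
  · rfl
  · rw [Finset.disjoint_left]
    intro X hX hX'
    simp only [Finset.mem_filter, Finset.mem_univ, true_and] at hX hX'
    rw [hX.1] at hX'
    exact absurd hX'.1 (by simp)

end AOT

/-- Let `n = 2^d`. The number of inputs `X ∈ {0,1}ⁿ` with `T_d(X) = Par(X)` is exactly
`2^(n-1) + 1` if `d` is even, and exactly `2^(n-1) - 1` if `d` is odd. -/
theorem andOrTree_agrees_parity_count (d : ℕ) :
    (Finset.univ.filter
        (fun X : Fin (2 ^ d) → Bool => andOrTree d X = parity X)).card
      = if Even d then 2 ^ (2 ^ d - 1) + 1 else 2 ^ (2 ^ d - 1) - 1 := by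
  obtain ⟨h1, h2, h3⟩ := AOT.key d
  rw [AOT.agree_card d]
  have hpow1 : 1 ≤ 2^(2^d - 1) := Nat.one_le_two_pow
  rcases Nat.even_or_odd d with hd | hd
  · rw [if_pos hd]
    rw [if_pos hd] at h3
    zify at h2 ⊢
    linarith
  · rw [if_neg (Nat.not_even_iff_odd.mpr hd)]
    rw [if_neg (Nat.not_even_iff_odd.mpr hd)] at h3
    zify [hpow1] at h2 ⊢
    linarith
end

section
/- For d ≥ 0 define the integer D_d := |{X ∈ {0,1}^{2^d} : T_d(X) = Par(X)}| − |{X ∈ {0,1}^{2^d} : T_d(X) ≠ Par(X)}| (the correlation between T_d and parity). Then D_0 = 2, and for every d ≥ 1 one has 2·D_d = (−1)^d · D_{d−1}². -/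
open Finset

/-- `D_d`: the correlation between `T_d` and parity, i.e. the number of inputs on which they
agree minus the number of inputs on which they disagree. -/
def corrD (d : ℕ) : ℤ :=
  ((Finset.univ.filter
      (fun X : Fin (2 ^ d) → Bool => andOrTree d X = parity X)).card : ℤ) -
  ((Finset.univ.filter
      (fun X : Fin (2 ^ d) → Bool => andOrTree d X ≠ parity X)).card : ℤ)

/-- The sign character on `Bool`. -/
def chi (b : Bool) : ℤ := if b then -1 else 1

lemma chi_mul_chi (a b : Bool) : chi a * chi b = if a = b then 1 else -1 := by
  cases a <;> cases b <;> simp [chi]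

lemma corrD_eq_sum (d : ℕ) :
    corrD d = ∑ X : Fin (2 ^ d) → Bool, chi (andOrTree d X) * chi (parity X) := by
  have h : ∀ X : Fin (2 ^ d) → Bool, chi (andOrTree d X) * chi (parity X)
      = if andOrTree d X = parity X then (1 : ℤ) else -1 := fun X => chi_mul_chi _ _
  rw [Finset.sum_congr rfl (fun X _ => h X), Finset.sum_ite, Finset.sum_const,
    Finset.sum_const, corrD]
  ring_nf

lemma chi_parity {n : ℕ} (X : Fin n → Bool) : chi (parity X) = ∏ i, chi (X i) := by
  have h1 : ∏ i, chi (X i)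
      = ∏ i ∈ univ.filter (fun i => X i = true), (-1 : ℤ) := by
    rw [Finset.prod_filter]
    refine Finset.prod_congr rfl fun i _ => ?_
    cases hx : X i <;> simp [chi, hx]
  rw [h1, Finset.prod_const]
  unfold parity
  rcases Nat.even_or_odd ((univ.filter (fun i => X i = true)).card) with he | ho
  · rw [he.neg_one_pow]
    have : (univ.filter (fun i => X i = true)).card % 2 = 0 := Nat.even_iff.mp he
    simp [chi, this]
  · rw [ho.neg_one_pow]
    have : (univ.filter (fun i => X i = true)).card % 2 = 1 := Nat.odd_iff.mp ho
    simp [chi, this]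

lemma sum_chi_parity (n : ℕ) (hn : 0 < n) :
    ∑ X : Fin n → Bool, chi (parity X) = 0 := by
  simp only [chi_parity]
  rw [← Fintype.piFinset_univ, ← Finset.prod_univ_sum]
  have h : ∑ b : Bool, chi b = 0 := by decide
  rw [Finset.prod_congr rfl (fun i _ => h), Finset.prod_const, zero_pow]
  simp [hn.ne']

/-- Joining two halves into an input of the double-size tree. -/
def joinX (d : ℕ) (L R : Fin (2 ^ d) → Bool) (j : Fin (2 ^ (d + 1))) : Bool :=
  if h : j.val < 2 ^ d then L ⟨j.val, h⟩
  else R ⟨j.val - 2 ^ d, by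
    have h1 := j.isLt
    have h2 : 2 ^ (d + 1) = 2 ^ d + 2 ^ d := by rw [pow_succ]; ring
    omega⟩

lemma joinX_left (d : ℕ) (L R : Fin (2 ^ d) → Bool) :
    (fun i : Fin (2 ^ d) =>
      joinX d L R (Fin.castLE (Nat.pow_le_pow_right (by norm_num) (Nat.le_succ d)) i)) = L := by
  funext i
  simp only [joinX, Fin.castLE]
  rw [dif_pos i.isLt]

lemma joinX_right (d : ℕ) (L R : Fin (2 ^ d) → Bool) :
    (fun i : Fin (2 ^ d) =>
      joinX d L R ⟨2 ^ d + i.val, by have := i.isLt; rw [pow_succ]; omega⟩) = R := by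
  funext i
  simp only [joinX]
  rw [dif_neg (by omega)]
  congr 1
  exact Fin.ext (by simp)

def pairEquiv (d : ℕ) :
    ((Fin (2 ^ d) → Bool) × (Fin (2 ^ d) → Bool)) ≃ (Fin (2 ^ (d + 1)) → Bool) where
  toFun p := joinX d p.1 p.2
  invFun X := (fun i => X (Fin.castLE (Nat.pow_le_pow_right (by norm_num) (Nat.le_succ d)) i),
               fun i => X ⟨2 ^ d + i.val, by have := i.isLt; rw [pow_succ]; omega⟩)
  left_inv p := by
    obtain ⟨L, R⟩ := p
    exact Prod.ext (joinX_left d L R) (joinX_right d L R)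
  right_inv X := by
    funext j
    by_cases h : j.val < 2 ^ d
    · show joinX d _ _ j = X j
      rw [joinX, dif_pos h]
      exact congrArg X (Fin.ext rfl)
    · show joinX d _ _ j = X j
      rw [joinX, dif_neg h]
      exact congrArg X (Fin.ext (by simp; omega))

lemma tree_join (d : ℕ) (L R : Fin (2 ^ d) → Bool) :
    andOrTree (d + 1) (joinX d L R)
      = if (d + 1) % 2 = 1 then (andOrTree d L && andOrTree d R)
        else (andOrTree d L || andOrTree d R) := by
  show (let l := andOrTree d _; let r := andOrTree d _;
    if (d + 1) % 2 = 1 then l && r else l || r) = _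
  rw [joinX_left d L R, joinX_right d L R]

lemma parity_join (d : ℕ) (L R : Fin (2 ^ d) → Bool) :
    chi (parity (joinX d L R)) = chi (parity L) * chi (parity R) := by
  rw [chi_parity, chi_parity, chi_parity]
  have e : 2 ^ (d + 1) = 2 ^ d + 2 ^ d := by rw [pow_succ]; ring
  rw [← Equiv.prod_comp (finCongr e.symm) (fun j => chi (joinX d L R j)), Fin.prod_univ_add]
  congr 1
  · refine Finset.prod_congr rfl fun i _ => ?_
    simp only [joinX, finCongr_apply]
    rw [dif_pos (by simp)]
    exact congrArg chi (congrArg L (Fin.ext (by simp)))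
  · refine Finset.prod_congr rfl fun i _ => ?_
    simp only [joinX, finCongr_apply]
    rw [dif_neg (by simp only [Fin.coe_cast, Fin.coe_natAdd]; omega)]
    exact congrArg chi (congrArg R (Fin.ext (by simp only [Fin.coe_cast, Fin.coe_natAdd]; omega)))

lemma and_key (a b : Bool) (p q : ℤ) :
    (2 * chi (a && b)) * (p * q)
      = p * q + (chi a * p) * q + p * (chi b * q) - (chi a * p) * (chi b * q) := by
  cases a <;> cases b <;> simp [chi] <;> ring

lemma or_key (a b : Bool) (p q : ℤ) :
    (2 * chi (a || b)) * (p * q)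
      = (-p) * q + (chi a * p) * q + p * (chi b * q) + (chi a * p) * (chi b * q) := by
  cases a <;> cases b <;> simp [chi] <;> ring

lemma step (d : ℕ) :
    2 * corrD (d + 1) = (if (d + 1) % 2 = 1 then (-1 : ℤ) else 1) * (corrD d) ^ 2 := by
  have hpos : 0 < 2 ^ d := Nat.pow_pos (by norm_num)
  have hP : ∑ X : Fin (2 ^ d) → Bool, chi (parity X) = 0 := sum_chi_parity _ hpos
  have hPn : ∑ X : Fin (2 ^ d) → Bool, -chi (parity X) = 0 := by
    rw [Finset.sum_neg_distrib, hP, neg_zero]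
  have hD : corrD d = ∑ X : Fin (2 ^ d) → Bool, chi (andOrTree d X) * chi (parity X) :=
    corrD_eq_sum d
  rw [corrD_eq_sum (d + 1), Finset.mul_sum,
    ← Fintype.sum_equiv (pairEquiv d)
      (fun p => 2 * (chi (andOrTree (d+1) (pairEquiv d p)) * chi (parity (pairEquiv d p))))
      (fun X => 2 * (chi (andOrTree (d+1) X) * chi (parity X))) (fun p => rfl)]
  have hrw : ∀ p : (Fin (2 ^ d) → Bool) × (Fin (2 ^ d) → Bool),
      2 * (chi (andOrTree (d+1) (pairEquiv d p)) * chi (parity (pairEquiv d p)))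
        = (2 * chi (if (d + 1) % 2 = 1 then (andOrTree d p.1 && andOrTree d p.2)
            else (andOrTree d p.1 || andOrTree d p.2))) * (chi (parity p.1) * chi (parity p.2)) := by
    intro p
    have h1 : andOrTree (d+1) (pairEquiv d p)
        = if (d + 1) % 2 = 1 then (andOrTree d p.1 && andOrTree d p.2)
          else (andOrTree d p.1 || andOrTree d p.2) := tree_join d p.1 p.2
    have h2 : chi (parity (pairEquiv d p)) = chi (parity p.1) * chi (parity p.2) :=
      parity_join d p.1 p.2
    rw [h1, h2]; ring
  rw [Finset.sum_congr rfl (fun p _ => hrw p), Fintype.sum_prod_type]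
  by_cases hd : (d + 1) % 2 = 1
  · simp only [hd, if_true]
    have key : ∀ L R : Fin (2 ^ d) → Bool,
        (2 * chi (andOrTree d L && andOrTree d R)) * (chi (parity L) * chi (parity R))
          = chi (parity L) * chi (parity R)
            + (chi (andOrTree d L) * chi (parity L)) * chi (parity R)
            + chi (parity L) * (chi (andOrTree d R) * chi (parity R))
            - (chi (andOrTree d L) * chi (parity L)) * (chi (andOrTree d R) * chi (parity R)) :=
      fun L R => and_key _ _ _ _
    calc ∑ L : Fin (2 ^ d) → Bool, ∑ R : Fin (2 ^ d) → Bool,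
            (2 * chi (andOrTree d L && andOrTree d R)) * (chi (parity L) * chi (parity R))
        = (∑ L : Fin (2 ^ d) → Bool, chi (parity L)) * (∑ R : Fin (2 ^ d) → Bool, chi (parity R))
          + (∑ L : Fin (2 ^ d) → Bool, chi (andOrTree d L) * chi (parity L))
            * (∑ R : Fin (2 ^ d) → Bool, chi (parity R))
          + (∑ L : Fin (2 ^ d) → Bool, chi (parity L))
            * (∑ R : Fin (2 ^ d) → Bool, chi (andOrTree d R) * chi (parity R))
          - (∑ L : Fin (2 ^ d) → Bool, chi (andOrTree d L) * chi (parity L))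
            * (∑ R : Fin (2 ^ d) → Bool, chi (andOrTree d R) * chi (parity R)) := by
            rw [Finset.sum_mul_sum, Finset.sum_mul_sum, Finset.sum_mul_sum, Finset.sum_mul_sum,
              ← Finset.sum_add_distrib, ← Finset.sum_add_distrib, ← Finset.sum_sub_distrib]
            refine Finset.sum_congr rfl fun L _ => ?_
            rw [← Finset.sum_add_distrib, ← Finset.sum_add_distrib, ← Finset.sum_sub_distrib]
            exact Finset.sum_congr rfl fun R _ => key L R
      _ = -1 * (corrD d) ^ 2 := by rw [hP, ← hD]; ring
  · simp only [hd, if_false]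
    have key : ∀ L R : Fin (2 ^ d) → Bool,
        (2 * chi (andOrTree d L || andOrTree d R)) * (chi (parity L) * chi (parity R))
          = (-chi (parity L)) * chi (parity R)
            + (chi (andOrTree d L) * chi (parity L)) * chi (parity R)
            + chi (parity L) * (chi (andOrTree d R) * chi (parity R))
            + (chi (andOrTree d L) * chi (parity L)) * (chi (andOrTree d R) * chi (parity R)) :=
      fun L R => or_key _ _ _ _
    calc ∑ L : Fin (2 ^ d) → Bool, ∑ R : Fin (2 ^ d) → Bool,
            (2 * chi (andOrTree d L || andOrTree d R)) * (chi (parity L) * chi (parity R))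
        = (∑ L : Fin (2 ^ d) → Bool, -chi (parity L)) * (∑ R : Fin (2 ^ d) → Bool, chi (parity R))
          + (∑ L : Fin (2 ^ d) → Bool, chi (andOrTree d L) * chi (parity L))
            * (∑ R : Fin (2 ^ d) → Bool, chi (parity R))
          + (∑ L : Fin (2 ^ d) → Bool, chi (parity L))
            * (∑ R : Fin (2 ^ d) → Bool, chi (andOrTree d R) * chi (parity R))
          + (∑ L : Fin (2 ^ d) → Bool, chi (andOrTree d L) * chi (parity L))
            * (∑ R : Fin (2 ^ d) → Bool, chi (andOrTree d R) * chi (parity R)) := by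
            rw [Finset.sum_mul_sum, Finset.sum_mul_sum, Finset.sum_mul_sum, Finset.sum_mul_sum,
              ← Finset.sum_add_distrib, ← Finset.sum_add_distrib, ← Finset.sum_add_distrib]
            refine Finset.sum_congr rfl fun L _ => ?_
            rw [← Finset.sum_add_distrib, ← Finset.sum_add_distrib, ← Finset.sum_add_distrib]
            exact Finset.sum_congr rfl fun R _ => key L R
      _ = 1 * (corrD d) ^ 2 := by rw [hP, hPn, ← hD]; ring

/-- `D_0 = 2`, and for every `d ≥ 1`, `2·D_d = (−1)^d · D_{d−1}²`. -/
theorem corrD_recurrence :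
    corrD 0 = 2 ∧ ∀ d : ℕ, 1 ≤ d → 2 * corrD d = (-1) ^ d * (corrD (d - 1)) ^ 2 := by
  constructor
  · decide
  · intro d hd
    obtain ⟨k, rfl⟩ : ∃ k, d = k + 1 := ⟨d - 1, by omega⟩
    rw [Nat.add_sub_cancel]
    have h := step k
    rcases Nat.even_or_odd (k + 1) with he | ho
    · rw [he.neg_one_pow]
      rwa [if_neg (by rw [Nat.even_iff] at he; omega)] at h
    · rw [ho.neg_one_pow]
      rwa [if_pos (Nat.odd_iff.mp ho)] at h
end

section
/- Let n = 2^d. The number of inputs X ∈ {0,1}ⁿ such that T_d(X) = 1 is odd. -/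
def splitEquiv (d : ℕ) :
    (Fin (2 ^ (d + 1)) → Bool) ≃ (Fin (2 ^ d) → Bool) × (Fin (2 ^ d) → Bool) where
  toFun X :=
    ⟨fun i => X (Fin.castLE (Nat.pow_le_pow_right (by norm_num) (Nat.le_succ d)) i),
     fun i => X ⟨2 ^ d + i.val, by have := i.isLt; rw [pow_succ]; omega⟩⟩
  invFun fg j :=
    if h : (j : ℕ) < 2 ^ d then fg.1 ⟨j, h⟩
    else fg.2 ⟨(j : ℕ) - 2 ^ d, by
      have h2 : (j : ℕ) < 2 ^ d * 2 := by rw [← pow_succ]; exact j.isLt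
      omega⟩
  left_inv X := by
    funext j
    by_cases h : (j : ℕ) < 2 ^ d
    · simp only [dif_pos h]
      exact congrArg X (Fin.ext rfl)
    · simp only [dif_neg h]
      exact congrArg X (Fin.ext (by simp; omega))
  right_inv fg := by
    refine Prod.ext (funext fun i => ?_) (funext fun i => ?_)
    · have h : ((Fin.castLE (Nat.pow_le_pow_right (by norm_num : 1 ≤ 2) (Nat.le_succ d)) i : Fin (2 ^ (d+1))) : ℕ) < 2 ^ d := i.isLt
      simp only [dif_pos h]
      exact congrArg fg.1 (Fin.ext rfl)
    · have h : ¬ (2 ^ d + i.val < 2 ^ d) := by omega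
      simp only [dif_neg h]
      exact congrArg fg.2 (Fin.ext (by simp))

lemma split_card (d : ℕ) (p q : (Fin (2 ^ d) → Bool) → Prop)
    [DecidablePred p] [DecidablePred q] :
    (Finset.univ.filter (fun X : Fin (2 ^ (d + 1)) → Bool =>
      p (fun i => X (Fin.castLE (Nat.pow_le_pow_right (by norm_num) (Nat.le_succ d)) i)) ∧
      q (fun i => X ⟨2 ^ d + i.val, by have := i.isLt; rw [pow_succ]; omega⟩))).card
    = (Finset.univ.filter p).card * (Finset.univ.filter q).card := by
  rw [← Finset.card_product]
  apply Finset.card_equiv (splitEquiv d)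
  intro X
  simp [splitEquiv, Finset.mem_product]

/-- The number of inputs `X ∈ {0,1}^{2^d}` with `T_d(X) = 1` is odd. -/
theorem andOrTree_ones_odd (d : ℕ) :
    Odd (Finset.univ.filter
      (fun X : Fin (2 ^ d) → Bool => andOrTree d X = true)).card := by
  induction d with
  | zero =>
    have : (Finset.univ.filter
        (fun X : Fin (2 ^ 0) → Bool => andOrTree 0 X = true)).card = 1 := by decide
    rw [this]; exact odd_one
  | succ d ih =>
    set a := (Finset.univ.filter
      (fun X : Fin (2 ^ d) → Bool => andOrTree d X = true)).card with ha
    by_cases h : (d + 1) % 2 = 1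
    · have key : (Finset.univ.filter
          (fun X : Fin (2 ^ (d + 1)) → Bool => andOrTree (d + 1) X = true)).card
          = a * a := by
        have := split_card d (fun Y => andOrTree d Y = true) (fun Y => andOrTree d Y = true)
        rw [← this]
        congr 1
        apply Finset.filter_congr
        intro X _
        simp only [andOrTree, if_pos h, Bool.and_eq_true]
      rw [key]
      exact ih.mul ih
    · have hN : Even ((Finset.univ : Finset (Fin (2 ^ d) → Bool)).card) := by
        rw [Finset.card_univ, Fintype.card_fun, Fintype.card_bool, Fintype.card_fin]
        exact Nat.even_pow.mpr ⟨even_two, by positivity⟩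
      have hsplit := Finset.card_filter_add_card_filter_not
        (s := (Finset.univ : Finset (Fin (2 ^ d) → Bool)))
        (p := fun Y => andOrTree d Y = true)
      have hfalse : (Finset.univ.filter
          (fun Y : Fin (2 ^ d) → Bool => andOrTree d Y = false)).card
          = (Finset.univ : Finset (Fin (2 ^ d) → Bool)).card - a := by
        have : (Finset.univ.filter
            (fun Y : Fin (2 ^ d) → Bool => ¬ andOrTree d Y = true))
            = (Finset.univ.filter (fun Y : Fin (2 ^ d) → Bool => andOrTree d Y = false)) := by
          apply Finset.filter_congr; intro Y _; simp
        rw [this] at hsplit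
        omega
      have hfodd : Odd ((Finset.univ : Finset (Fin (2 ^ d) → Bool)).card - a) := by
        have hle : a ≤ (Finset.univ : Finset (Fin (2 ^ d) → Bool)).card :=
          Finset.card_filter_le _ _
        exact Nat.Even.sub_odd hle hN ih
      have key : (Finset.univ.filter
          (fun X : Fin (2 ^ (d + 1)) → Bool => andOrTree (d + 1) X = false)).card
          = ((Finset.univ : Finset (Fin (2 ^ d) → Bool)).card - a) *
            ((Finset.univ : Finset (Fin (2 ^ d) → Bool)).card - a) := by
        have := split_card d (fun Y => andOrTree d Y = false) (fun Y => andOrTree d Y = false)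
        rw [← hfalse, ← this]
        congr 1
        apply Finset.filter_congr
        intro X _
        simp only [andOrTree, if_neg h, Bool.or_eq_false_iff]
      have hN' : Even ((Finset.univ : Finset (Fin (2 ^ (d + 1)) → Bool)).card) := by
        rw [Finset.card_univ, Fintype.card_fun, Fintype.card_bool, Fintype.card_fin]
        exact Nat.even_pow.mpr ⟨even_two, by positivity⟩
      have hsplit' := Finset.card_filter_add_card_filter_not
        (s := (Finset.univ : Finset (Fin (2 ^ (d + 1)) → Bool)))
        (p := fun X => andOrTree (d + 1) X = true)
      have heq : (Finset.univ.filter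
          (fun X : Fin (2 ^ (d + 1)) → Bool => ¬ andOrTree (d + 1) X = true))
          = (Finset.univ.filter
          (fun X : Fin (2 ^ (d + 1)) → Bool => andOrTree (d + 1) X = false)) := by
        apply Finset.filter_congr; intro X _; simp
      rw [heq, key] at hsplit'
      have hoo := hfodd.mul hfodd
      rcases hN' with ⟨m, hm⟩
      rcases hoo with ⟨k, hk⟩
      rw [hk, hm] at hsplit'
      refine ⟨m - k - 1, by omega⟩
end

section
/- Let n = 2^d. For every Boolean function f : {0,1}ⁿ → {0,1}, there exists a function g among the four functions {constant 0, constant 1, T_d, 1 − T_d} such that |{X ∈ {0,1}ⁿ : f(X) = g(X)}| ≥ 2^{n−1} + 1. -/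
def glue (d : ℕ) (A B : Fin (2^d) → Bool) : Fin (2^(d+1)) → Bool :=
  fun j => if h : (j : ℕ) < 2^d then A ⟨j, h⟩
    else B ⟨(j : ℕ) - 2^d, by
      have h1 := j.isLt
      have h2 : (2:ℕ)^(d+1) = 2^d * 2 := pow_succ 2 d
      omega⟩

lemma glue_left (d : ℕ) (A B : Fin (2^d) → Bool) :
    (fun i => glue d A B
      (Fin.castLE (Nat.pow_le_pow_right (by norm_num) (Nat.le_succ d)) i)) = A := by
  funext i
  simp [glue, i.isLt]

lemma glue_right (d : ℕ) (A B : Fin (2^d) → Bool) :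
    (fun i : Fin (2^d) => glue d A B
      ⟨2^d + i.val, by have := i.isLt; rw [pow_succ]; omega⟩) = B := by
  funext i
  have h : ¬ (2^d + i.val < 2^d) := by omega
  simp only [glue, dif_neg h]
  congr 1
  ext
  simp

lemma andOrTree_glue (d : ℕ) (A B : Fin (2^d) → Bool) :
    andOrTree (d+1) (glue d A B) =
      if (d + 1) % 2 = 1 then andOrTree d A && andOrTree d B
      else andOrTree d A || andOrTree d B := by
  rw [andOrTree]
  simp only [glue_left, glue_right]

def glueEquiv (d : ℕ) : ((Fin (2^d) → Bool) × (Fin (2^d) → Bool)) ≃ (Fin (2^(d+1)) → Bool) where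
  toFun p := glue d p.1 p.2
  invFun X := (fun i => X (Fin.castLE (Nat.pow_le_pow_right (by norm_num) (Nat.le_succ d)) i),
    fun i => X ⟨2^d + i.val, by have := i.isLt; rw [pow_succ]; omega⟩)
  left_inv p := by
    cases p with
    | mk A B => simp [glue_left d A B, glue_right d A B]
  right_inv X := by
    funext j
    by_cases h : (j : ℕ) < 2^d
    · simp only [glue, dif_pos h]
      congr 1
    · simp only [glue, dif_neg h]
      congr 1
      ext
      show 2^d + ((j : ℕ) - 2^d) = (j : ℕ)
      omega

lemma treeSum (d : ℕ) :
    ∑ X : Fin (2^d) → Bool, (if andOrTree d X = true then (1 : ZMod 2) else 0) = 1 := by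
  induction d with
  | zero => decide
  | succ d ih =>
    rw [← Equiv.sum_comp (glueEquiv d)
      (fun X => if andOrTree (d+1) X = true then (1 : ZMod 2) else 0)]
    have hge : ∀ p : (Fin (2^d) → Bool) × (Fin (2^d) → Bool),
        glueEquiv d p = glue d p.1 p.2 := fun _ => rfl
    simp only [hge]
    rw [Fintype.sum_prod_type]
    simp only [andOrTree_glue]
    have hcard : ((Fintype.card (Fin (2^d) → Bool) : ℕ) : ZMod 2) = 0 := by
      simp only [Fintype.card_fun, Fintype.card_fin, Fintype.card_bool]
      have h1 : 1 ≤ 2^d := Nat.one_le_two_pow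
      obtain ⟨k, hk⟩ : ∃ k, 2^d = k + 1 := ⟨2^d - 1, by omega⟩
      rw [hk, pow_succ]
      push_cast
      rw [show (2 : ZMod 2) = 0 from by decide, mul_zero]
    rcases Nat.mod_two_eq_zero_or_one (d+1) with hpar | hpar
    · -- OR gate
      simp only [hpar, if_neg (by omega : ¬ (0 = 1))]
      have hor : ∀ a b : Bool, (if (a || b) = true then (1 : ZMod 2) else 0)
          = (if a = true then (1:ZMod 2) else 0) + (if b = true then (1:ZMod 2) else 0)
            + (if a = true then (1:ZMod 2) else 0) * (if b = true then (1:ZMod 2) else 0) := by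
        decide
      simp only [hor]
      have step : ∀ A : Fin (2^d) → Bool, (∑ B : Fin (2^d) → Bool,
          ((if andOrTree d A = true then (1:ZMod 2) else 0)
            + (if andOrTree d B = true then (1:ZMod 2) else 0)
            + (if andOrTree d A = true then (1:ZMod 2) else 0)
              * (if andOrTree d B = true then (1:ZMod 2) else 0)))
          = 1 + (if andOrTree d A = true then (1:ZMod 2) else 0) := by
        intro A
        rw [Finset.sum_add_distrib, Finset.sum_add_distrib, Finset.sum_const,
          Finset.card_univ, nsmul_eq_mul, hcard, zero_mul, ih, ← Finset.mul_sum, ih,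
          mul_one, zero_add]
      rw [Finset.sum_congr rfl (fun A _ => step A), Finset.sum_add_distrib, ih,
        Finset.sum_const, Finset.card_univ, nsmul_eq_mul, mul_one, hcard, zero_add]
    · simp only [hpar, if_true]
      have hand : ∀ a b : Bool, (if (a && b) = true then (1 : ZMod 2) else 0)
          = (if a = true then (1:ZMod 2) else 0) * (if b = true then (1:ZMod 2) else 0) := by
        decide
      simp only [hand]
      have step : ∀ A : Fin (2^d) → Bool, (∑ B : Fin (2^d) → Bool,
          ((if andOrTree d A = true then (1:ZMod 2) else 0)
            * (if andOrTree d B = true then (1:ZMod 2) else 0)))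
          = (if andOrTree d A = true then (1:ZMod 2) else 0) := by
        intro A
        rw [← Finset.mul_sum, ih, mul_one]
      rw [Finset.sum_congr rfl (fun A _ => step A), ih]

/-- Let `n = 2^d`. For every Boolean function `f : {0,1}ⁿ → {0,1}`, one of the four functions
`{constant 0, constant 1, T_d, 1 − T_d}` agrees with `f` on at least `2^(n-1) + 1` inputs. -/
theorem weak_f_via_andOrTree (d : ℕ) (f : (Fin (2 ^ d) → Bool) → Bool) :
    ∃ g ∈ [(fun _ : Fin (2 ^ d) → Bool => false), (fun _ : Fin (2 ^ d) → Bool => true),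
           andOrTree d, (fun X : Fin (2 ^ d) → Bool => !andOrTree d X)],
      2 ^ (2 ^ d - 1) + 1 ≤
        (Finset.univ.filter (fun X : Fin (2 ^ d) → Bool => f X = g X)).card := by
  by_contra hcon
  push_neg at hcon
  simp only [List.mem_cons, List.not_mem_nil, or_false, forall_eq_or_imp, forall_eq,
    Nat.lt_succ_iff] at hcon
  obtain ⟨h0, h1, hT, hN⟩ := hcon
  set H := 2 ^ (2 ^ d - 1) with hH
  have hn : 1 ≤ 2 ^ d := Nat.one_le_two_pow
  have hpow : (2:ℕ) ^ (2^d) = 2 * H := by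
    rw [hH]
    conv_lhs => rw [show 2^d = (2^d - 1) + 1 by omega]
    rw [pow_succ]
    ring
  have hNcard : Fintype.card (Fin (2 ^ d) → Bool) = 2 * H := by
    simp only [Fintype.card_fun, Fintype.card_fin, Fintype.card_bool]
    exact hpow
  have hsum01 : (Finset.univ.filter (fun X : Fin (2^d) → Bool => f X = false)).card
      + (Finset.univ.filter (fun X : Fin (2^d) → Bool => f X = true)).card = 2 * H := by
    have h := Finset.card_filter_add_card_filter_not
      (s := (Finset.univ : Finset (Fin (2^d) → Bool))) (p := fun X => f X = false)
    have he : (Finset.univ.filter (fun X : Fin (2^d) → Bool => ¬ f X = false))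
        = Finset.univ.filter (fun X : Fin (2^d) → Bool => f X = true) := by
      ext X
      simp
    rw [he, Finset.card_univ, hNcard] at h
    exact h
  have hsumT : (Finset.univ.filter (fun X : Fin (2^d) → Bool => f X = andOrTree d X)).card
      + (Finset.univ.filter (fun X : Fin (2^d) → Bool => f X = !andOrTree d X)).card = 2 * H := by
    have h := Finset.card_filter_add_card_filter_not
      (s := (Finset.univ : Finset (Fin (2^d) → Bool))) (p := fun X => f X = andOrTree d X)
    have he : (Finset.univ.filter (fun X : Fin (2^d) → Bool => ¬ f X = andOrTree d X))
        = Finset.univ.filter (fun X : Fin (2^d) → Bool => f X = !andOrTree d X) := by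
      ext X
      simp only [Finset.mem_filter, Finset.mem_univ, true_and]
      cases hf : f X <;> cases ht : andOrTree d X <;> simp
    rw [he, Finset.card_univ, hNcard] at h
    exact h
  have hc1 : (Finset.univ.filter (fun X : Fin (2^d) → Bool => f X = true)).card = H := by omega
  have hcT : (Finset.univ.filter (fun X : Fin (2^d) → Bool => f X = andOrTree d X)).card = H := by
    omega
  have castCard : ∀ p : (Fin (2^d) → Bool) → Prop, ∀ _ : DecidablePred p,
      ((Finset.univ.filter p).card : ZMod 2) = ∑ X, (if p X then (1 : ZMod 2) else 0) := by
    intro p hp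
    rw [Finset.card_filter]
    push_cast
    rfl
  have key : ∀ X : Fin (2^d) → Bool,
      (if f X = andOrTree d X then (1 : ZMod 2) else 0)
      + (if andOrTree d X = true then (1 : ZMod 2) else 0)
      + (if f X = true then (1 : ZMod 2) else 0) = 1 := by
    intro X
    cases hf : f X <;> cases ht : andOrTree d X <;> (simp [hf, ht]; try decide)
  have hsum : (((Finset.univ.filter (fun X : Fin (2^d) → Bool => f X = andOrTree d X)).card : ℕ)
        : ZMod 2)
      + (((Finset.univ.filter (fun X : Fin (2^d) → Bool => andOrTree d X = true)).card : ℕ)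
        : ZMod 2)
      + (((Finset.univ.filter (fun X : Fin (2^d) → Bool => f X = true)).card : ℕ) : ZMod 2)
      = ((Fintype.card (Fin (2^d) → Bool) : ℕ) : ZMod 2) := by
    rw [castCard _ _, castCard _ _, castCard _ _, ← Finset.sum_add_distrib,
      ← Finset.sum_add_distrib]
    simp only [key]
    rw [Finset.sum_const, Finset.card_univ, nsmul_eq_mul, mul_one]
  have htree : (((Finset.univ.filter
      (fun X : Fin (2^d) → Bool => andOrTree d X = true)).card : ℕ) : ZMod 2) = 1 := by
    rw [castCard _ _]
    exact treeSum d
  rw [hcT, hc1, htree, hNcard] at hsum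
  push_cast at hsum
  have h2 : ((H : ZMod 2) + 1 + (H : ZMod 2)) = 2 * (H : ZMod 2) + 1 := by ring
  rw [h2] at hsum
  have h4 : (2 : ZMod 2) = 0 := by decide
  rw [h4, zero_mul, zero_add] at hsum
  exact absurd hsum (by decide)
end

section
/- (Simon) Let n ≥ 2 and let f : {0,1}ⁿ → {0,1} be a Boolean function depending on all n of its input variables, i.e., for every i ∈ [n] there exists X ∈ {0,1}ⁿ with f(X^{{i}}) ≠ f(X). Then s(f) ≥ (1/2)·log₂ n − (1/2)·log₂ log₂ n + 1/2. -/
open Finset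

/-- `X` with its `i`-th bit flipped. -/
def flipBit {n : ℕ} (X : Fin n → Bool) (i : Fin n) : Fin n → Bool :=
  Function.update X i (!X i)

def cns {m : ℕ} (b : Bool) (y : Fin m → Bool) : Fin (m+1) → Bool := Fin.cons b y

@[simp] lemma cns_zero {m} (b : Bool) (y : Fin m → Bool) : cns b y 0 = b := rfl
@[simp] lemma cns_succ {m} (b : Bool) (y : Fin m → Bool) (j : Fin m) : cns b y j.succ = y j := by
  simp [cns]

lemma cns_injective {m} (b : Bool) : Function.Injective (cns (m := m) b) := by
  intro y z h
  funext j
  have := congrFun h j.succ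
  simpa using this

lemma cns_self_tail {m} (x : Fin (m+1) → Bool) : cns (x 0) (Fin.tail x) = x :=
  Fin.cons_self_tail x

lemma flip_cns_zero {m} (b : Bool) (y : Fin m → Bool) :
    flipBit (cns b y) 0 = cns (!b) y := by
  unfold flipBit cns; rw [Fin.cons_zero, Fin.update_cons_zero]

lemma flip_cns_succ {m} (b : Bool) (y : Fin m → Bool) (j : Fin m) :
    flipBit (cns b y) j.succ = cns b (flipBit y j) := by
  unfold flipBit cns; rw [Fin.cons_succ, Fin.cons_update]

lemma mindeg_card : ∀ (m : ℕ) (d : ℕ) (B : Finset (Fin m → Bool)), B.Nonempty →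
    (∀ x ∈ B, d ≤ (Finset.univ.filter (fun i => flipBit x i ∈ B)).card) → 2 ^ d ≤ B.card := by
  intro m
  induction m with
  | zero =>
    rintro d B ⟨x, hx⟩ hdeg
    have h := hdeg x hx
    have hd : d = 0 := by
      have : (Finset.univ.filter (fun i : Fin 0 => flipBit x i ∈ B)).card = 0 := by simp
      omega
    subst hd
    simpa using Finset.card_pos.mpr ⟨x, hx⟩
  | succ m ih =>
    rintro d B hBne hdeg
    set B0 : Finset (Fin m → Bool) := Finset.univ.filter (fun y => cns false y ∈ B) with hB0
    set B1 : Finset (Fin m → Bool) := Finset.univ.filter (fun y => cns true y ∈ B) with hB1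
    have memB : ∀ (b : Bool) (y : Fin m → Bool),
        y ∈ (if b then B1 else B0) ↔ cns b y ∈ B := by
      intro b y; cases b <;> simp [hB0, hB1]
    -- card of B bounds
    have hcard : B0.card + B1.card ≤ B.card := by
      have hsub : (B0.image (cns false) ∪ B1.image (cns true)) ⊆ B := by
        intro x hx
        rcases Finset.mem_union.mp hx with hx | hx
        · obtain ⟨y, hy, rfl⟩ := Finset.mem_image.mp hx
          exact (memB false y).mp (by simpa using hy)
        · obtain ⟨y, hy, rfl⟩ := Finset.mem_image.mp hx
          exact (memB true y).mp (by simpa using hy)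
      have hdisj : Disjoint (B0.image (cns false)) (B1.image (cns true)) := by
        rw [Finset.disjoint_left]
        rintro x hx0 hx1
        obtain ⟨y, _, rfl⟩ := Finset.mem_image.mp hx0
        obtain ⟨z, _, hz⟩ := Finset.mem_image.mp hx1
        have := congrFun hz 0
        simp at this
      calc B0.card + B1.card
          = (B0.image (cns false)).card + (B1.image (cns true)).card := by
            rw [Finset.card_image_of_injective _ (cns_injective false),
              Finset.card_image_of_injective _ (cns_injective true)]
        _ = (B0.image (cns false) ∪ B1.image (cns true)).card :=
            (Finset.card_union_of_disjoint hdisj).symm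
        _ ≤ B.card := Finset.card_le_card hsub
    -- degree transfer
    have hdegb : ∀ (b : Bool) (y : Fin m → Bool), cns b y ∈ B →
        (Finset.univ.filter (fun i : Fin (m+1) => flipBit (cns b y) i ∈ B)) ⊆
          insert (0 : Fin (m+1)) ((Finset.univ.filter
            (fun j : Fin m => flipBit y j ∈ (if b then B1 else B0))).image Fin.succ) := by
      intro b y _ i hi
      rw [Finset.mem_filter] at hi
      rcases Fin.eq_zero_or_eq_succ i with rfl | ⟨j, rfl⟩
      · exact Finset.mem_insert_self _ _
      · refine Finset.mem_insert_of_mem (Finset.mem_image.mpr ⟨j, ?_, rfl⟩)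
        rw [Finset.mem_filter]
        refine ⟨Finset.mem_univ _, (memB b _).mpr ?_⟩
        rw [← flip_cns_succ]; exact hi.2
    have hzero : ∀ (b : Bool) (y : Fin m → Bool), cns (!b) y ∉ B →
        (0 : Fin (m+1)) ∉ (Finset.univ.filter (fun i : Fin (m+1) => flipBit (cns b y) i ∈ B)) := by
      intro b y h hmem
      rw [Finset.mem_filter, flip_cns_zero] at hmem
      exact h hmem.2
    by_cases h0 : B0.Nonempty <;> by_cases h1 : B1.Nonempty
    · -- both nonempty
      have key : ∀ (b : Bool), 2 ^ (d - 1) ≤ (if b then B1 else B0).card := by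
        intro b
        refine ih (d-1) _ (by cases b <;> simpa) ?_
        intro y hy
        have hyB : cns b y ∈ B := (memB b y).mp hy
        have h1 := hdeg _ hyB
        have h2 := Finset.card_le_card (hdegb b y hyB)
        have h3 := Finset.card_insert_le (0 : Fin (m+1)) ((Finset.univ.filter
            (fun j : Fin m => flipBit y j ∈ (if b then B1 else B0))).image Fin.succ)
        have h4 : ((Finset.univ.filter
            (fun j : Fin m => flipBit y j ∈ (if b then B1 else B0))).image Fin.succ).card
            = (Finset.univ.filter
            (fun j : Fin m => flipBit y j ∈ (if b then B1 else B0))).card :=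
          Finset.card_image_of_injective _ (Fin.succ_injective m)
        omega
      have k0 : 2 ^ (d - 1) ≤ B0.card := key false
      have k1 : 2 ^ (d - 1) ≤ B1.card := key true
      have hpow : 2 ^ d ≤ 2 ^ (d - 1) + 2 ^ (d - 1) := by
        cases d with
        | zero => simp
        | succ d => rw [pow_succ]; simp only [Nat.add_sub_cancel]; omega
      omega
    · -- B1 empty
      have key : 2 ^ d ≤ B0.card := by
        refine ih d _ h0 ?_
        intro y hy
        have hyB : cns false y ∈ B := (memB false y).mp hy
        have hcross : cns true y ∉ B := fun hc => h1 ⟨y, (memB true y).mpr hc⟩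
        have h1' := hdeg _ hyB
        have hz := hzero false y (by simpa using hcross)
        have h2 : (Finset.univ.filter (fun i : Fin (m+1) => flipBit (cns false y) i ∈ B)).card ≤
            ((Finset.univ.filter (fun j : Fin m => flipBit y j ∈ B0)).image Fin.succ).card :=
          Finset.card_le_card
            ((Finset.subset_insert_iff_of_notMem hz).mp (hdegb false y hyB))
        have h4 : ((Finset.univ.filter
            (fun j : Fin m => flipBit y j ∈ B0)).image Fin.succ).card
            = (Finset.univ.filter (fun j : Fin m => flipBit y j ∈ B0)).card :=
          Finset.card_image_of_injective _ (Fin.succ_injective m)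
        omega
      omega
    · -- B0 empty
      have key : 2 ^ d ≤ B1.card := by
        refine ih d _ h1 ?_
        intro y hy
        have hyB : cns true y ∈ B := (memB true y).mp hy
        have hcross : cns false y ∉ B := fun hc => h0 ⟨y, (memB false y).mpr hc⟩
        have h1' := hdeg _ hyB
        have hz := hzero true y (by simpa using hcross)
        have h2 : (Finset.univ.filter (fun i : Fin (m+1) => flipBit (cns true y) i ∈ B)).card ≤
            ((Finset.univ.filter (fun j : Fin m => flipBit y j ∈ B1)).image Fin.succ).card :=
          Finset.card_le_card
            ((Finset.subset_insert_iff_of_notMem hz).mp (hdegb true y hyB))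
        have h4 : ((Finset.univ.filter
            (fun j : Fin m => flipBit y j ∈ B1)).image Fin.succ).card
            = (Finset.univ.filter (fun j : Fin m => flipBit y j ∈ B1)).card :=
          Finset.card_image_of_injective _ (Fin.succ_injective m)
        omega
      omega
    · -- both empty: contradiction
      exfalso
      obtain ⟨x, hx⟩ := hBne
      rw [← cns_self_tail x] at hx
      cases hb : x 0
      · rw [hb] at hx; exact h0 ⟨Fin.tail x, (memB false _).mpr hx⟩
      · rw [hb] at hx; exact h1 ⟨Fin.tail x, (memB true _).mpr hx⟩

/-- The sensitivity `s(f)`: the maximum over inputs `X` of the number of coordinates `i`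
such that flipping the `i`-th bit of `X` changes the value of `f`. -/
def sens {n : ℕ} (f : (Fin n → Bool) → Bool) : ℕ :=
  Finset.univ.sup (fun X : Fin n → Bool =>
    (Finset.univ.filter (fun i : Fin n => f (flipBit X i) ≠ f X)).card)

lemma flip_flip' {n} (x : Fin n → Bool) (i : Fin n) : flipBit (flipBit x i) i = x := by
  funext j
  by_cases h : j = i
  · subst h; simp [flipBit]
  · simp [flipBit, Function.update_of_ne h]

lemma flip_apply_self {n} (x : Fin n → Bool) (i : Fin n) : flipBit x i i = !x i := by
  simp [flipBit]

lemma flip_apply_ne {n} (x : Fin n → Bool) {i j : Fin n} (h : j ≠ i) : flipBit x i j = x j := by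
  simp [flipBit, Function.update_of_ne h]

lemma flip_comm {n} (x : Fin n → Bool) {i j : Fin n} (h : i ≠ j) :
    flipBit (flipBit x i) j = flipBit (flipBit x j) i := by
  funext k
  by_cases hk : k = j
  · subst hk; rw [flip_apply_self, flip_apply_ne _ h.symm, flip_apply_ne _ h.symm, flip_apply_self]
  · by_cases hk' : k = i
    · subst hk'; rw [flip_apply_ne _ hk, flip_apply_self, flip_apply_self, flip_apply_ne _ hk]
    · rw [flip_apply_ne _ hk, flip_apply_ne _ hk', flip_apply_ne _ hk', flip_apply_ne _ hk]

lemma sensAt_le_sens {n} (f : (Fin n → Bool) → Bool) (x : Fin n → Bool) :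
    (Finset.univ.filter (fun i : Fin n => f (flipBit x i) ≠ f x)).card ≤ sens f :=
  Finset.le_sup (f := fun X : Fin n → Bool =>
    (Finset.univ.filter (fun i : Fin n => f (flipBit X i) ≠ f X)).card) (Finset.mem_univ x)

/-- Simon's lemma: the set of inputs sensitive to a relevant variable `i` is large. -/
lemma simon_lemma {n : ℕ} (f : (Fin n → Bool) → Bool) (i : Fin n)
    (hi : ∃ X : Fin n → Bool, f (flipBit X i) ≠ f X) :
    2 ^ (n + 2) ≤ (Finset.univ.filter (fun x : Fin n → Bool => f (flipBit x i) ≠ f x)).card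
      * 2 ^ (2 * sens f) := by
  set s := sens f with hs
  set A : Finset (Fin n → Bool) :=
    Finset.univ.filter (fun x => f (flipBit x i) ≠ f x) with hA
  have memA : ∀ x, x ∈ A ↔ f (flipBit x i) ≠ f x := by intro x; simp [hA]
  -- A is closed under flipping bit i
  have hAflip : ∀ x ∈ A, flipBit x i ∈ A := by
    intro x hx
    rw [memA] at hx ⊢
    rw [flip_flip']
    exact fun h => hx h.symm
  -- s ≥ 1
  have hs1 : 1 ≤ s := by
    obtain ⟨X, hX⟩ := hi
    have h1 : (Finset.univ.filter (fun j : Fin n => f (flipBit X j) ≠ f X)).Nonempty :=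
      ⟨i, by simp [hX]⟩
    calc 1 ≤ (Finset.univ.filter (fun j : Fin n => f (flipBit X j) ≠ f X)).card :=
          Finset.card_pos.mpr h1
      _ ≤ s := sensAt_le_sens f X
  set B : Finset (Fin n → Bool) := A.filter (fun x => x i = false) with hB
  -- B nonempty
  have hBne : B.Nonempty := by
    obtain ⟨X, hX⟩ := hi
    have hXA : X ∈ A := (memA X).mpr hX
    cases hXi : X i
    · exact ⟨X, Finset.mem_filter.mpr ⟨hXA, hXi⟩⟩
    · refine ⟨flipBit X i, Finset.mem_filter.mpr ⟨hAflip X hXA, ?_⟩⟩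
      rw [flip_apply_self, hXi]; rfl
  -- |A| ≥ 2|B|
  have hAB : 2 * B.card ≤ A.card := by
    set B' : Finset (Fin n → Bool) := A.filter (fun x => x i = true) with hB'
    have himg : B.image (fun x => flipBit x i) ⊆ B' := by
      intro x hx
      obtain ⟨y, hy, rfl⟩ := Finset.mem_image.mp hx
      rw [Finset.mem_filter] at hy ⊢
      exact ⟨hAflip y hy.1, by rw [flip_apply_self, hy.2]; rfl⟩
    have hinj : Set.InjOn (fun x => flipBit x i) B := by
      intro x _ y _ h
      have := congrArg (fun z => flipBit z i) h
      simpa [flip_flip'] using this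
    have h1 : B.card ≤ B'.card := by
      calc B.card = (B.image (fun x => flipBit x i)).card :=
            (Finset.card_image_of_injOn hinj).symm
        _ ≤ B'.card := Finset.card_le_card himg
    have h2 : B.card + B'.card ≤ A.card := by
      have : B ∪ B' ⊆ A := by
        intro x hx
        rcases Finset.mem_union.mp hx with hx | hx <;> exact (Finset.mem_filter.mp hx).1
      have hdisj : Disjoint B B' := by
        rw [Finset.disjoint_left]
        intro x hx hx'
        have h1 := (Finset.mem_filter.mp hx).2
        have h2 := (Finset.mem_filter.mp hx').2
        rw [h1] at h2; exact Bool.false_ne_true h2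
      calc B.card + B'.card = (B ∪ B').card := (Finset.card_union_of_disjoint hdisj).symm
        _ ≤ A.card := Finset.card_le_card this
    omega
  -- min degree of B
  have hdeg : ∀ x ∈ B, n - (2 * s - 1) ≤
      (Finset.univ.filter (fun j => flipBit x j ∈ B)).card := by
    intro x hx
    obtain ⟨hxA, hxi⟩ := Finset.mem_filter.mp hx
    have hxA' := (memA x).mp hxA
    set Sx := Finset.univ.filter (fun j : Fin n => f (flipBit x j) ≠ f x) with hSx
    set Sxi := Finset.univ.filter
      (fun j : Fin n => f (flipBit (flipBit x i) j) ≠ f (flipBit x i)) with hSxi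
    set Good := Finset.univ.filter (fun j : Fin n => flipBit x j ∈ B) with hGood
    -- every j not Good is in {i} ∪ Sx.erase i ∪ Sxi.erase i
    have hbad : ∀ j : Fin n, j ∉ Good → j ∈ insert i (Sx.erase i ∪ Sxi.erase i) := by
      intro j hj
      rw [hGood, Finset.mem_filter] at hj
      push_neg at hj
      have hj' : flipBit x j ∉ B := hj (Finset.mem_univ j)
      by_cases hji : j = i
      · rw [hji]; exact Finset.mem_insert_self i _
      · refine Finset.mem_insert_of_mem ?_
        by_cases hjS : f (flipBit x j) ≠ f x
        · exact Finset.mem_union_left _ (Finset.mem_erase.mpr ⟨hji,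
            Finset.mem_filter.mpr ⟨Finset.mem_univ _, hjS⟩⟩)
        · push_neg at hjS
          -- flipBit x j ∉ A since its i-bit is false and it's not in B
          have hxji : (flipBit x j) i = false := by rw [flip_apply_ne _ (Ne.symm hji)]; exact hxi
          have hnA : flipBit x j ∉ A := by
            intro hc
            exact hj' (Finset.mem_filter.mpr ⟨hc, hxji⟩)
          rw [memA] at hnA
          push_neg at hnA
          refine Finset.mem_union_right _ (Finset.mem_erase.mpr ⟨hji,
            Finset.mem_filter.mpr ⟨Finset.mem_univ _, ?_⟩⟩)
          rw [flip_comm x (Ne.symm hji)]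
          rw [hnA, hjS]
          exact fun h => hxA' h.symm
    have hcardbad : (insert i (Sx.erase i ∪ Sxi.erase i)).card ≤ 2 * s - 1 := by
      have hiSx : i ∈ Sx := Finset.mem_filter.mpr ⟨Finset.mem_univ _, hxA'⟩
      have hiSxi : i ∈ Sxi := by
        refine Finset.mem_filter.mpr ⟨Finset.mem_univ _, ?_⟩
        rw [flip_flip']
        exact fun h => hxA' h.symm
      have h1 : (Sx.erase i).card ≤ s - 1 := by
        have hcx : Sx.card ≤ s := sensAt_le_sens f x
        rw [Finset.card_erase_of_mem hiSx]
        omega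
      have h2 : (Sxi.erase i).card ≤ s - 1 := by
        have hcxi : Sxi.card ≤ s := sensAt_le_sens f (flipBit x i)
        rw [Finset.card_erase_of_mem hiSxi]
        omega
      calc (insert i (Sx.erase i ∪ Sxi.erase i)).card
          ≤ (Sx.erase i ∪ Sxi.erase i).card + 1 := Finset.card_insert_le _ _
        _ ≤ (Sx.erase i).card + (Sxi.erase i).card + 1 := by
            have := Finset.card_union_le (Sx.erase i) (Sxi.erase i); omega
        _ ≤ 2 * s - 1 := by omega
    -- n ≤ Good.card + (2s - 1)
    have hcover : n ≤ Good.card + (2 * s - 1) := by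
      have : (Finset.univ : Finset (Fin n)) ⊆ Good ∪ insert i (Sx.erase i ∪ Sxi.erase i) := by
        intro j _
        by_cases hj : j ∈ Good
        · exact Finset.mem_union_left _ hj
        · exact Finset.mem_union_right _ (hbad j hj)
      have h := Finset.card_le_card this
      have h' := Finset.card_union_le Good (insert i (Sx.erase i ∪ Sxi.erase i))
      simp only [Finset.card_univ, Fintype.card_fin] at h
      omega
    omega
  -- apply mindeg
  have hmin := mindeg_card n (n - (2 * s - 1)) B hBne hdeg
  -- combine
  have hexp : n + 2 ≤ (n - (2 * s - 1)) + 1 + 2 * s := by omega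
  calc 2 ^ (n + 2) ≤ 2 ^ ((n - (2 * s - 1)) + 1 + 2 * s) := Nat.pow_le_pow_right (by norm_num) hexp
    _ = 2 ^ (n - (2 * s - 1)) * 2 * 2 ^ (2 * s) := by ring
    _ ≤ B.card * 2 * 2 ^ (2 * s) := by
        have := Nat.mul_le_mul_right (2 * 2 ^ (2 * s)) hmin
        calc 2 ^ (n - (2 * s - 1)) * 2 * 2 ^ (2 * s)
            = 2 ^ (n - (2 * s - 1)) * (2 * 2 ^ (2 * s)) := by ring
          _ ≤ B.card * (2 * 2 ^ (2 * s)) := this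
          _ = B.card * 2 * 2 ^ (2 * s) := by ring
    _ ≤ A.card * 2 ^ (2 * s) := by
        have : B.card * 2 ≤ A.card := by omega
        exact Nat.mul_le_mul_right _ this

lemma double_count {n : ℕ} (f : (Fin n → Bool) → Bool) :
    (Finset.univ.sum (fun i : Fin n =>
      (Finset.univ.filter (fun x : Fin n → Bool => f (flipBit x i) ≠ f x)).card))
    ≤ 2 ^ n * sens f := by
  have h1 : ∀ i : Fin n, (Finset.univ.filter
      (fun x : Fin n → Bool => f (flipBit x i) ≠ f x)).card
      = Finset.univ.sum (fun x : Fin n → Bool => if f (flipBit x i) ≠ f x then 1 else 0) := by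
    intro i; rw [Finset.card_filter]
  calc (Finset.univ.sum (fun i : Fin n =>
        (Finset.univ.filter (fun x : Fin n → Bool => f (flipBit x i) ≠ f x)).card))
      = Finset.univ.sum (fun i : Fin n => Finset.univ.sum
          (fun x : Fin n → Bool => if f (flipBit x i) ≠ f x then 1 else 0)) := by
        exact Finset.sum_congr rfl (fun i _ => h1 i)
    _ = Finset.univ.sum (fun x : Fin n → Bool => Finset.univ.sum
          (fun i : Fin n => if f (flipBit x i) ≠ f x then 1 else 0)) := Finset.sum_comm
    _ = Finset.univ.sum (fun x : Fin n → Bool =>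
          (Finset.univ.filter (fun i : Fin n => f (flipBit x i) ≠ f x)).card) := by
        exact Finset.sum_congr rfl (fun x _ => (Finset.card_filter _ _).symm)
    _ ≤ Finset.univ.sum (fun _ : Fin n → Bool => sens f) :=
        Finset.sum_le_sum (fun x _ => sensAt_le_sens f x)
    _ = 2 ^ n * sens f := by
        rw [Finset.sum_const, Finset.card_univ]
        simp [Finset.card_univ]

lemma simon_combinatorial {n : ℕ} (f : (Fin n → Bool) → Bool)
    (hdep : ∀ i : Fin n, ∃ X : Fin n → Bool, f (flipBit X i) ≠ f X) :
    4 * n ≤ sens f * 2 ^ (2 * sens f) := by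
  have h1 : n * 2 ^ (n + 2) ≤ (Finset.univ.sum (fun i : Fin n =>
      (Finset.univ.filter (fun x : Fin n → Bool => f (flipBit x i) ≠ f x)).card))
      * 2 ^ (2 * sens f) := by
    rw [Finset.sum_mul]
    calc n * 2 ^ (n + 2) = Finset.univ.sum (fun _ : Fin n => 2 ^ (n + 2)) := by
          rw [Finset.sum_const, Finset.card_univ, Fintype.card_fin, smul_eq_mul]
      _ ≤ _ := Finset.sum_le_sum (fun i _ => simon_lemma f i (hdep i))
  have h2 := double_count f
  have h3 : n * 2 ^ (n + 2) ≤ 2 ^ n * sens f * 2 ^ (2 * sens f) :=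
    h1.trans (Nat.mul_le_mul_right _ h2)
  have h4 : n * 2 ^ (n + 2) = (4 * n) * 2 ^ n := by ring
  have h5 : 2 ^ n * sens f * 2 ^ (2 * sens f) = (sens f * 2 ^ (2 * sens f)) * 2 ^ n := by ring
  rw [h4, h5] at h3
  exact Nat.le_of_mul_le_mul_right h3 (by positivity)


lemma analytic_step (n s : ℕ) (hn : 2 ≤ n) (hs1 : 1 ≤ s)
    (h : 4 * n ≤ s * 2 ^ (2 * s)) :
    ((s : ℝ)) ≥ (1 / 2) * Real.logb 2 n - (1 / 2) * Real.logb 2 (Real.logb 2 n) + 1 / 2 := by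
  set L : ℝ := Real.logb 2 n with hL
  have hnpos : (0 : ℝ) < n := by positivity
  have hspos : (0 : ℝ) < s := by exact_mod_cast hs1
  have hL1 : 1 ≤ L := by
    rw [hL]
    calc (1 : ℝ) = Real.logb 2 2 := (Real.logb_self_eq_one one_lt_two).symm
      _ ≤ Real.logb 2 n := Real.logb_le_logb_of_le one_lt_two (by norm_num) (by exact_mod_cast hn)
  -- take logs of the combinatorial inequality
  have hcast : (4 * n : ℝ) ≤ (s : ℝ) * 2 ^ (2 * s) := by exact_mod_cast h
  have hlog : Real.logb 2 (4 * n) ≤ Real.logb 2 ((s : ℝ) * 2 ^ (2 * s)) :=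
    Real.logb_le_logb_of_le one_lt_two (by positivity) hcast
  have hlhs : Real.logb 2 (4 * (n : ℝ)) = 2 + L := by
    rw [Real.logb_mul (by norm_num) (ne_of_gt hnpos)]
    congr 1
    rw [show (4 : ℝ) = 2 ^ (2 : ℕ) by norm_num, Real.logb_pow,
      Real.logb_self_eq_one one_lt_two]
    norm_num
  have hrhs : Real.logb 2 ((s : ℝ) * 2 ^ (2 * s)) = Real.logb 2 s + 2 * s := by
    rw [Real.logb_mul (ne_of_gt hspos) (by positivity), Real.logb_pow,
      Real.logb_self_eq_one one_lt_two]
    push_cast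
    ring
  rw [hlhs, hrhs] at hlog
  -- hlog : 2 + L ≤ logb 2 s + 2 s
  by_cases hcase : (s : ℝ) ≤ 2 * L
  · have h2 : Real.logb 2 s ≤ Real.logb 2 (2 * L) :=
      Real.logb_le_logb_of_le one_lt_two hspos hcase
    have h3 : Real.logb 2 (2 * L) = 1 + Real.logb 2 L := by
      rw [Real.logb_mul (by norm_num) (by linarith), Real.logb_self_eq_one one_lt_two]
    rw [h3] at h2
    linarith
  · push_neg at hcase
    have h4 : 0 ≤ Real.logb 2 L := Real.logb_nonneg one_lt_two hL1
    linarith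

/-- Simon: if `f : {0,1}ⁿ → {0,1}` depends on all `n` of its variables, then
`s(f) ≥ (1/2)·log₂ n − (1/2)·log₂ log₂ n + 1/2`. -/
theorem simon_sensitivity (n : ℕ) (hn : 2 ≤ n) (f : (Fin n → Bool) → Bool)
    (hdep : ∀ i : Fin n, ∃ X : Fin n → Bool, f (flipBit X i) ≠ f X) :
    ((sens f : ℝ)) ≥
      (1 / 2) * Real.logb 2 n - (1 / 2) * Real.logb 2 (Real.logb 2 n) + 1 / 2 := by
  have hs1 : 1 ≤ sens f := by
    obtain ⟨X, hX⟩ := hdep ⟨0, by omega⟩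
    have h1 : (Finset.univ.filter (fun j : Fin n => f (flipBit X j) ≠ f X)).Nonempty :=
      ⟨⟨0, by omega⟩, by simp [hX]⟩
    calc 1 ≤ (Finset.univ.filter (fun j : Fin n => f (flipBit X j) ≠ f X)).card :=
          Finset.card_pos.mpr h1
      _ ≤ sens f := sensAt_le_sens f X
  exact analytic_step n (sens f) hn hs1 (simon_combinatorial f hdep)
end

section
/- (Beals–Buhrman–Cleve–Mosca–de Wolf) For every Boolean function f : {0,1}ⁿ → {0,1}, deg(f) ≤ bs(f)³. -/
/-- A real polynomial in `n` variables is multilinear if it has degree at most 1 in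
each variable. -/
def Multilinear {n : ℕ} (p : MvPolynomial (Fin n) ℝ) : Prop :=
  ∀ i : Fin n, p.degreeOf i ≤ 1

/-- `p` represents the Boolean function `f` on `{0,1}ⁿ`. -/
def Represents {n : ℕ} (p : MvPolynomial (Fin n) ℝ) (f : (Fin n → Bool) → Bool) : Prop :=
  ∀ X : Fin n → Bool,
    MvPolynomial.eval (fun i => if X i then (1 : ℝ) else 0) p = if f X then 1 else 0

/-- `X` with all the bits in the block `B` flipped. -/
def flipBlock {n : ℕ} (X : Fin n → Bool) (B : Finset (Fin n)) : Fin n → Bool :=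
  fun i => if i ∈ B then !X i else X i

/-- The block sensitivity `bs(f)`: the maximum over inputs `X` of the maximum number `k` of
pairwise disjoint blocks `B₁,…,B_k ⊆ [n]` with `f(X^{B_j}) ≠ f(X)` for all `j`. -/
noncomputable def blockSens {n : ℕ} (f : (Fin n → Bool) → Bool) : ℕ :=
  Finset.univ.sup (fun X : Fin n → Bool =>
    sSup {k : ℕ | ∃ B : Fin k → Finset (Fin n),
      (∀ j j' : Fin k, j ≠ j' → Disjoint (B j) (B j')) ∧
      ∀ j : Fin k, f (flipBlock X (B j)) ≠ f X})

open Finset MvPolynomial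

variable {n : ℕ}

lemma flipBlock_empty (X : Fin n → Bool) : flipBlock X ∅ = X := by
  funext i; simp [flipBlock]

lemma le_blockSens (f : (Fin n → Bool) → Bool) (X : Fin n → Bool) (k : ℕ)
    (B : Fin k → Finset (Fin n)) (hd : ∀ j j', j ≠ j' → Disjoint (B j) (B j'))
    (hs : ∀ j, f (flipBlock X (B j)) ≠ f X) : k ≤ blockSens f := by
  have hbdd : BddAbove {k : ℕ | ∃ B : Fin k → Finset (Fin n),
      (∀ j j', j ≠ j' → Disjoint (B j) (B j')) ∧ ∀ j, f (flipBlock X (B j)) ≠ f X} := by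
    refine ⟨n, fun k' hk' => ?_⟩
    obtain ⟨B, hd, hs⟩ := hk'
    have hne : ∀ j, (B j).Nonempty := by
      intro j
      rcases (B j).eq_empty_or_nonempty with h | h
      · exact absurd (by rw [h, flipBlock_empty]) (hs j)
      · exact h
    have hinj : Function.Injective (fun j => (B j).min' (hne j)) := by
      intro j j' hjj'
      by_contra hne2
      have h1 : (B j).min' (hne j) ∈ B j := (B j).min'_mem (hne j)
      have h2 : (B j).min' (hne j) ∈ B j' := by
        have : (B j).min' (hne j) = (B j').min' (hne j') := hjj'
        rw [this]; exact (B j').min'_mem (hne j')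
      exact (Finset.disjoint_left.mp (hd j j' hne2) h1) h2
    simpa using Fintype.card_le_of_injective _ hinj
  calc k ≤ sSup {k : ℕ | ∃ B : Fin k → Finset (Fin n),
      (∀ j j', j ≠ j' → Disjoint (B j) (B j')) ∧ ∀ j, f (flipBlock X (B j)) ≠ f X} :=
        le_csSup hbdd ⟨B, hd, hs⟩
    _ ≤ blockSens f := Finset.le_sup (f := fun X : Fin n → Bool =>
      sSup {k : ℕ | ∃ B : Fin k → Finset (Fin n),
        (∀ j j' : Fin k, j ≠ j' → Disjoint (B j) (B j')) ∧
        ∀ j : Fin k, f (flipBlock X (B j)) ≠ f X}) (mem_univ X)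

lemma flip_flip_single (Y : Fin n → Bool) (B : Finset (Fin n)) (i : Fin n) (hi : i ∈ B) :
    flipBlock (flipBlock Y B) {i} = flipBlock Y (B.erase i) := by
  funext j
  by_cases hj : j = i
  · subst hj; simp [flipBlock, hi]
  · by_cases hjB : j ∈ B <;> simp [flipBlock, hj, hjB]

lemma flip_ne_of_bool {a b : Bool} (h : a ≠ b) : (!a) = b := by
  cases a <;> cases b <;> simp_all

lemma exists_certificate (f : (Fin n → Bool) → Bool) (Y : Fin n → Bool) :
    ∃ S : Finset (Fin n), S.card ≤ blockSens f * blockSens f ∧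
      ∀ Z : Fin n → Bool, (∀ i ∈ S, Z i = Y i) → f Z = f Y := by
  classical
  set b := blockSens f with hb
  -- sensitive blocks
  let Sens : Finset (Finset (Fin n)) := univ.filter (fun B => f (flipBlock Y B) ≠ f Y)
  -- minimal sensitive blocks
  let MinS : Finset (Finset (Fin n)) :=
    Sens.filter (fun B => ∀ B' ∈ Sens, B' ⊆ B → B' = B)
  have hSensMem : ∀ B, B ∈ Sens ↔ f (flipBlock Y B) ≠ f Y := by
    intro B; simp [Sens]
  -- minimal sensitive blocks are small
  have hMinCard : ∀ B ∈ MinS, B.card ≤ b := by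
    intro B hB
    simp only [MinS, mem_filter] at hB
    obtain ⟨hBsens, hBmin⟩ := hB
    rw [hSensMem] at hBsens
    -- all singletons from B are sensitive at flipBlock Y B
    have hsing : ∀ i ∈ B, f (flipBlock (flipBlock Y B) {i}) ≠ f (flipBlock Y B) := by
      intro i hi
      rw [flip_flip_single Y B i hi]
      have herase : f (flipBlock Y (B.erase i)) = f Y := by
        by_contra hcon
        have : B.erase i = B := hBmin _ ((hSensMem _).mpr hcon) (erase_subset _ _)
        have hi' : i ∈ B.erase i := by rw [this]; exact hi
        exact (notMem_erase i B) hi'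
      rw [herase]
      exact fun hcon => hBsens hcon.symm
    -- enumerate B
    have := le_blockSens f (flipBlock Y B) B.card
      (fun j => {(B.equivFin.symm j : Fin n)})
      (fun j j' hjj' => by
        simp only [Finset.disjoint_singleton_left, Finset.mem_singleton]
        intro hc
        exact hjj' (B.equivFin.symm.injective (Subtype.ext hc)))
      (fun j => hsing _ (B.equivFin.symm j).2)
    exact this
  -- existence of a minimal sensitive block inside any sensitive block
  have hMinExists : ∀ D, f (flipBlock Y D) ≠ f Y → ∃ B ∈ MinS, B ⊆ D := by
    intro D hD
    have hne : (D.powerset.filter (fun B => f (flipBlock Y B) ≠ f Y)).Nonempty :=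
      ⟨D, by simp [hD]⟩
    obtain ⟨B, hBmem, hBmin⟩ := Finset.exists_min_image _ Finset.card hne
    simp only [mem_filter, mem_powerset] at hBmem
    refine ⟨B, ?_, hBmem.1⟩
    simp only [MinS, mem_filter]
    refine ⟨(hSensMem _).mpr hBmem.2, fun B' hB' hsub => ?_⟩
    rw [hSensMem] at hB'
    have hB'mem : B' ∈ D.powerset.filter (fun B => f (flipBlock Y B) ≠ f Y) := by
      simp [mem_filter, mem_powerset, hsub.trans hBmem.1, hB']
    exact Finset.eq_of_subset_of_card_le hsub (hBmin _ hB'mem)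
  -- maximal disjoint family of minimal sensitive blocks
  let Valid : Finset (Finset (Fin n)) → Prop := fun F =>
    (∀ B ∈ F, B ∈ MinS) ∧ ∀ B ∈ F, ∀ B' ∈ F, B ≠ B' → Disjoint B B'
  have hVne : ((univ : Finset (Finset (Finset (Fin n)))).filter Valid).Nonempty :=
    ⟨∅, by simp [Valid]⟩
  obtain ⟨F, hFmem, hFmax⟩ := Finset.exists_max_image _ Finset.card hVne
  simp only [mem_filter, mem_univ, true_and] at hFmem
  obtain ⟨hFmin, hFdisj⟩ := hFmem
  -- the union
  refine ⟨F.biUnion id, ?_, ?_⟩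
  · -- cardinality bound
    have hFcard : F.card ≤ b := by
      -- blocks in F are nonempty
      have hne : ∀ B ∈ F, (B : Finset (Fin n)).Nonempty := by
        intro B hBF
        rcases B.eq_empty_or_nonempty with h | h
        · exfalso
          have := (hSensMem B).mp (mem_of_mem_filter B (hFmin B hBF))
          rw [h, flipBlock_empty] at this
          exact this rfl
        · exact h
      refine le_blockSens f Y F.card (fun j => (F.equivFin.symm j : Finset (Fin n)))
        (fun j j' hjj' => hFdisj _ (F.equivFin.symm j).2 _ (F.equivFin.symm j').2
          (fun hc => hjj' (F.equivFin.symm.injective (Subtype.ext hc))))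
        (fun j => (hSensMem _).mp (mem_of_mem_filter _ (hFmin _ (F.equivFin.symm j).2)))
    calc (F.biUnion id).card ≤ ∑ B ∈ F, B.card := Finset.card_biUnion_le
      _ ≤ F.card * b := by
          simpa [smul_eq_mul] using
            Finset.sum_le_card_nsmul F _ b (fun B hBF => hMinCard B (hFmin B hBF))
      _ ≤ b * b := Nat.mul_le_mul_right b hFcard
  · -- certificate property
    intro Z hZ
    by_contra hcon
    have hDsens : f (flipBlock Y (univ.filter (fun i => Z i ≠ Y i))) ≠ f Y := by
      have hflip : flipBlock Y (univ.filter (fun i => Z i ≠ Y i)) = Z := by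
        funext i
        by_cases hzy : Z i = Y i
        · simp [flipBlock, hzy]
        · have h1 : i ∈ filter (fun i => Z i ≠ Y i) univ := by simp [hzy]
          simp only [flipBlock, if_pos h1]
          exact flip_ne_of_bool (a := Y i) (b := Z i) (fun h => hzy h.symm)
      rw [hflip]; exact hcon
    obtain ⟨B', hB'min, hB'sub⟩ := hMinExists _ hDsens
    -- B' is disjoint from the union
    have hB'disjU : Disjoint B' (F.biUnion id) := by
      rw [Finset.disjoint_left]
      intro i hiB' hiU
      have hiD := hB'sub hiB'
      simp only [mem_filter, mem_univ, true_and] at hiD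
      exact hiD (hZ i hiU)
    have hB'notF : B' ∉ F := by
      intro hB'F
      have hsub : B' ⊆ F.biUnion id := Finset.subset_biUnion_of_mem id hB'F
      have : B' = ∅ := by
        rw [← Finset.subset_empty]
        intro i hi
        exact absurd (hsub hi) (Finset.disjoint_left.mp hB'disjU hi)
      have hBsens := (hSensMem B').mp (mem_of_mem_filter B' hB'min)
      rw [this, flipBlock_empty] at hBsens
      exact hBsens rfl
    -- insert B' into F : bigger valid family
    have hvalid : Valid (insert B' F) := by
      constructor
      · intro B hB
        rcases Finset.mem_insert.mp hB with h | h
        · exact h ▸ hB'min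
        · exact hFmin B h
      · intro B hB C hC hBC
        rcases Finset.mem_insert.mp hB with h | h <;>
          rcases Finset.mem_insert.mp hC with h' | h'
        · exact absurd (h.trans h'.symm) hBC
        · rw [h]; exact hB'disjU.mono_right (Finset.subset_biUnion_of_mem id h')
        · rw [h']; exact (hB'disjU.mono_right (Finset.subset_biUnion_of_mem id h)).symm
        · exact hFdisj B h C h' hBC
    have hcard := hFmax (insert B' F) (Finset.mem_filter.mpr ⟨Finset.mem_univ _, hvalid⟩)
    rw [Finset.card_insert_of_notMem hB'notF] at hcard
    omega

-- ### Polynomial helpers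

def chiR {n : ℕ} (X : Fin n → Bool) : Fin n → ℝ := fun i => if X i then (1 : ℝ) else 0

lemma mydegreeOf_sum_le {α : Type*} (j : Fin n) (s : Finset α)
    (g : α → MvPolynomial (Fin n) ℝ) (c : ℕ) (h : ∀ a ∈ s, MvPolynomial.degreeOf j (g a) ≤ c) :
    MvPolynomial.degreeOf j (∑ a ∈ s, g a) ≤ c := by
  classical
  induction s using Finset.cons_induction with
  | empty => simp [MvPolynomial.degreeOf_zero]
  | cons a s ha ih =>
      rw [Finset.sum_cons]
      refine le_trans (MvPolynomial.degreeOf_add_le _ _ _) (sup_le ?_ ?_)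
      · exact h a (Finset.mem_cons_self a s)
      · exact ih (fun a' ha' => h a' (Finset.mem_cons_of_mem ha'))

lemma mydegreeOf_prod_le {α : Type*} (j : Fin n) (s : Finset α)
    (g : α → MvPolynomial (Fin n) ℝ) :
    MvPolynomial.degreeOf j (∏ a ∈ s, g a) ≤ ∑ a ∈ s, MvPolynomial.degreeOf j (g a) := by
  classical
  induction s using Finset.cons_induction with
  | empty =>
      have : ((1 : MvPolynomial (Fin n) ℝ)).degreeOf j = 0 := by
        rw [← MvPolynomial.C_1, MvPolynomial.degreeOf_C]
      simp [this]
  | cons a s ha ih =>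
      rw [Finset.prod_cons, Finset.sum_cons]
      exact le_trans (MvPolynomial.degreeOf_mul_le _ _ _) (Nat.add_le_add le_rfl ih)

lemma degreeOf_one_sub_X (j i : Fin n) :
    MvPolynomial.degreeOf j ((1 : MvPolynomial (Fin n) ℝ) - MvPolynomial.X i)
      ≤ if j = i then 1 else 0 := by
  classical
  rw [MvPolynomial.degreeOf_le_iff]
  intro m hm
  have h := MvPolynomial.support_sub (Fin n) (1 : MvPolynomial (Fin n) ℝ) (MvPolynomial.X i) hm
  rw [Finset.mem_union, MvPolynomial.support_X] at h
  rcases h with h | h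
  · have hsub : ((1 : MvPolynomial (Fin n) ℝ)).support ⊆ {0} := by
      rw [← MvPolynomial.C_1, MvPolynomial.C_apply]
      exact MvPolynomial.support_monomial_subset
    have hm0 : m = 0 := by simpa using hsub h
    simp [hm0]
  · rw [Finset.mem_singleton] at h
    subst h
    rw [Finsupp.single_apply]
    split_ifs with h2 h3 h3 <;> omega

lemma degreeOf_factor_le (j i : Fin n) (W : Finset (Fin n)) :
    MvPolynomial.degreeOf j
        (if i ∈ W then (MvPolynomial.X i : MvPolynomial (Fin n) ℝ) else 1 - MvPolynomial.X i)
      ≤ if j = i then 1 else 0 := by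
  classical
  by_cases hW : i ∈ W
  · rw [if_pos hW, MvPolynomial.degreeOf_X]
  · rw [if_neg hW]
    exact degreeOf_one_sub_X j i

noncomputable def indP {n : ℕ} (T W : Finset (Fin n)) : MvPolynomial (Fin n) ℝ :=
  ∏ i ∈ T, (if i ∈ W then (MvPolynomial.X i : MvPolynomial (Fin n) ℝ) else 1 - MvPolynomial.X i)

lemma degreeOf_indP_le (j : Fin n) (T W : Finset (Fin n)) :
    MvPolynomial.degreeOf j (indP T W) ≤ if j ∈ T then 1 else 0 := by
  classical
  refine le_trans (mydegreeOf_prod_le j T _) ?_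
  calc ∑ i ∈ T, MvPolynomial.degreeOf j
        (if i ∈ W then (MvPolynomial.X i : MvPolynomial (Fin n) ℝ) else 1 - MvPolynomial.X i)
      ≤ ∑ i ∈ T, (if j = i then 1 else 0) :=
        Finset.sum_le_sum (fun i _ => degreeOf_factor_le j i W)
    _ = if j ∈ T then 1 else 0 := by rw [Finset.sum_ite_eq]

lemma totalDegree_indP_le (T W : Finset (Fin n)) : (indP T W).totalDegree ≤ T.card := by
  classical
  refine le_trans (MvPolynomial.totalDegree_finset_prod T _) ?_
  calc ∑ i ∈ T, (if i ∈ W then (MvPolynomial.X i : MvPolynomial (Fin n) ℝ)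
          else 1 - MvPolynomial.X i).totalDegree
      ≤ ∑ _i ∈ T, 1 := by
        refine Finset.sum_le_sum (fun i _ => ?_)
        split_ifs with h
        · exact le_of_eq (MvPolynomial.totalDegree_X i)
        · rw [sub_eq_add_neg]
          refine le_trans (MvPolynomial.totalDegree_add _ _) ?_
          rw [MvPolynomial.totalDegree_neg, MvPolynomial.totalDegree_one,
            MvPolynomial.totalDegree_X]
          simp
    _ = T.card := by simp

lemma eval_indP_one (Xb : Fin n → Bool) (T W : Finset (Fin n))
    (h : ∀ i ∈ T, (Xb i = true ↔ i ∈ W)) :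
    MvPolynomial.eval (chiR Xb) (indP T W) = 1 := by
  rw [indP, map_prod]
  refine Finset.prod_eq_one (fun i hi => ?_)
  by_cases hW : i ∈ W
  · have hXb : Xb i = true := (h i hi).mpr hW
    simp [hW, chiR, hXb]
  · have hXb : Xb i ≠ true := fun hc => hW ((h i hi).mp hc)
    simp only [Bool.not_eq_true] at hXb
    simp [hW, chiR, hXb]

lemma eval_indP_zero (Xb : Fin n → Bool) (T W : Finset (Fin n))
    (i : Fin n) (hi : i ∈ T) (h : ¬(Xb i = true ↔ i ∈ W)) :
    MvPolynomial.eval (chiR Xb) (indP T W) = 0 := by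
  rw [indP, map_prod]
  refine Finset.prod_eq_zero hi ?_
  by_cases hW : i ∈ W
  · have hXb : Xb i ≠ true := fun hc => h ⟨fun _ => hW, fun _ => hc⟩
    simp only [Bool.not_eq_true] at hXb
    simp [hW, chiR, hXb]
  · have hXb : Xb i = true := by
      by_contra hc
      exact h ⟨fun h' => absurd h' hc, fun h' => absurd h' hW⟩
    simp [hW, chiR, hXb]

/-- Uniqueness: a multilinear polynomial vanishing on the cube is zero. -/
lemma ml_eq_zero (r : MvPolynomial (Fin n) ℝ) (h1 : ∀ i, r.degreeOf i ≤ 1)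
    (h0 : ∀ Xb : Fin n → Bool, MvPolynomial.eval (chiR Xb) r = 0) : r = 0 := by
  classical
  by_contra hr
  have hsupp : r.support.Nonempty := by
    rw [Finset.nonempty_iff_ne_empty]
    intro hc
    exact hr (MvPolynomial.support_eq_empty.mp hc)
  obtain ⟨m, hm, hmin⟩ := Finset.exists_min_image r.support (fun d => d.support.card) hsupp
  have hle : ∀ d ∈ r.support, ∀ i, d i ≤ 1 :=
    fun d hd i => (MvPolynomial.degreeOf_le_iff.mp (h1 i)) d hd
  set Xb : Fin n → Bool := fun i => decide (i ∈ m.support) with hXb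
  have heval := h0 Xb
  rw [MvPolynomial.eval_eq] at heval
  rw [Finset.sum_eq_single m] at heval
  · have hprod : ∏ i ∈ m.support, chiR Xb i ^ m i = 1 := by
      refine Finset.prod_eq_one (fun i hi => ?_)
      have hc : chiR Xb i = 1 := by
        simp only [chiR, hXb]
        rw [if_pos]
        simpa using hi
      rw [hc, one_pow]
    rw [hprod, mul_one] at heval
    exact (MvPolynomial.mem_support_iff.mp hm) heval
  · intro d hd hdm
    by_cases hsub : d.support ⊆ m.support
    · exfalso
      have hcard' : m.support.card ≤ d.support.card := hmin d hd
      have hsupeq : d.support = m.support :=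
        Finset.eq_of_subset_of_card_le hsub hcard'
      apply hdm
      ext i
      by_cases hi : i ∈ d.support
      · have h1d : d i = 1 := le_antisymm (hle d hd i) (Nat.one_le_iff_ne_zero.mpr
          (Finsupp.mem_support_iff.mp hi))
        have h1m : m i = 1 := le_antisymm (hle m hm i) (Nat.one_le_iff_ne_zero.mpr
          (Finsupp.mem_support_iff.mp (hsupeq ▸ hi)))
        rw [h1d, h1m]
      · have h0d : d i = 0 := Finsupp.notMem_support_iff.mp hi
        have h0m : m i = 0 := Finsupp.notMem_support_iff.mp (fun hc => hi (hsupeq ▸ hc))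
        rw [h0d, h0m]
    · obtain ⟨i, hid, him⟩ := Finset.not_subset.mp hsub
      have hzero : chiR Xb i ^ d i = 0 := by
        have hchi : chiR Xb i = 0 := by
          simp only [chiR, hXb]
          rw [if_neg]
          simpa using him
        rw [hchi]
        exact zero_pow (Finsupp.mem_support_iff.mp hid)
      rw [Finset.prod_eq_zero hid hzero, mul_zero]
  · intro hc
    exact absurd hm hc

lemma construct (f : (Fin n → Bool) → Bool) (c : ℕ)
    (hcert : ∀ Y : Fin n → Bool, ∃ S : Finset (Fin n), S.card ≤ c ∧
      ∀ Z : Fin n → Bool, (∀ i ∈ S, Z i = Y i) → f Z = f Y) :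
    ∀ (m : ℕ) (D : Finset (Fin n)) (v : Fin n → Bool),
      (∀ Xb : Fin n → Bool, (∀ i ∈ D, Xb i = v i) → f Xb = false →
        ∀ B : Fin m → Finset (Fin n), (∀ j j', j ≠ j' → Disjoint (B j) (B j')) →
        (∀ j, Disjoint (B j) D) → ∃ j, f (flipBlock Xb (B j)) ≠ true) →
      ∃ q : MvPolynomial (Fin n) ℝ,
        (∀ i, q.degreeOf i ≤ 1) ∧ (∀ i ∈ D, q.degreeOf i = 0) ∧
        q.totalDegree ≤ (m - 1) * c ∧
        ∀ Xb : Fin n → Bool, (∀ i ∈ D, Xb i = v i) →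
          MvPolynomial.eval (chiR Xb) q = if f Xb then 1 else 0 := by
  classical
  intro m
  induction m with
  | zero =>
      intro D v h
      refine ⟨MvPolynomial.C 1, ?_, ?_, ?_, ?_⟩
      · intro i; rw [MvPolynomial.degreeOf_C]; omega
      · intro i _; rw [MvPolynomial.degreeOf_C]
      · simp [MvPolynomial.totalDegree_C]
      · intro Xb hext
        have hft : f Xb = true := by
          by_contra hf
          rw [Bool.not_eq_true] at hf
          obtain ⟨j, _⟩ := h Xb hext hf Fin.elim0 (fun j => j.elim0) (fun j => j.elim0)
          exact j.elim0
        simp [hft]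
  | succ m ih =>
      intro D v h
      by_cases hT : ∃ Y, (∀ i ∈ D, Y i = v i) ∧ f Y = true
      · by_cases hF : ∃ Z, (∀ i ∈ D, Z i = v i) ∧ f Z = false
        · obtain ⟨Y, hYext, hYtrue⟩ := hT
          obtain ⟨Z, hZext, hZfalse⟩ := hF
          -- m ≥ 1
          have hm1 : 1 ≤ m := by
            by_contra hm
            push_neg at hm
            have hm0 : m = 0 := by omega
            subst hm0
            have hflipZY : flipBlock Z (Finset.univ.filter (fun i => Z i ≠ Y i)) = Y := by
              funext i
              by_cases hzy : Z i = Y i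
              · simp [flipBlock, hzy]
              · have h1 : i ∈ Finset.univ.filter (fun i => Z i ≠ Y i) := by simp [hzy]
                simp only [flipBlock, if_pos h1]
                exact flip_ne_of_bool (a := Z i) (b := Y i) hzy
            obtain ⟨j, hj⟩ := h Z hZext hZfalse
              (fun _ => Finset.univ.filter (fun i => Z i ≠ Y i))
              (fun j j' hjj' => absurd (by
                have h1 := j.isLt; have h2 := j'.isLt
                exact Fin.ext (by omega)) hjj')
              (fun _ => by
                rw [Finset.disjoint_left]
                intro i hi hiD
                simp only [Finset.mem_filter] at hi
                exact hi.2 ((hZext i hiD).trans (hYext i hiD).symm))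
            rw [hflipZY, hYtrue] at hj
            exact hj rfl
          obtain ⟨S, hScard, hScert⟩ := hcert Y
          set T := S \ D with hTdef
          -- the key hypothesis for recursion
          have key : ∀ W : Finset (Fin n),
              ∀ Xb : Fin n → Bool,
                (∀ i ∈ D ∪ T, Xb i = (if i ∈ T then decide (i ∈ W) else v i)) →
                f Xb = false →
                ∀ B : Fin m → Finset (Fin n), (∀ j j', j ≠ j' → Disjoint (B j) (B j')) →
                (∀ j, Disjoint (B j) (D ∪ T)) → ∃ j, f (flipBlock Xb (B j)) ≠ true := by
            intro W Xb hext hfalse B hBd hBD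
            set B0 := S.filter (fun i => Xb i ≠ Y i) with hB0def
            have hB0T : B0 ⊆ T := by
              intro i hi
              simp only [hB0def, Finset.mem_filter] at hi
              rw [hTdef, Finset.mem_sdiff]
              refine ⟨hi.1, fun hiD => ?_⟩
              have h1 : Xb i = v i := by
                have := hext i (Finset.mem_union_left _ hiD)
                rwa [if_neg (by rw [hTdef, Finset.mem_sdiff]; tauto)] at this
              exact hi.2 (h1.trans (hYext i hiD).symm)
            have hflip : f (flipBlock Xb B0) = true := by
              have hagree : ∀ i ∈ S, flipBlock Xb B0 i = Y i := by
                intro i hiS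
                by_cases hxy : Xb i = Y i
                · have : i ∉ B0 := by simp [hB0def, hxy]
                  simp [flipBlock, this, hxy]
                · have hmem : i ∈ B0 := by simp [hB0def, hiS, hxy]
                  simp only [flipBlock, if_pos hmem]
                  exact flip_ne_of_bool (a := Xb i) (b := Y i) hxy
              exact (hScert _ hagree).trans hYtrue
            have hextD : ∀ i ∈ D, Xb i = v i := by
              intro i hiD
              have := hext i (Finset.mem_union_left _ hiD)
              rwa [if_neg (by rw [hTdef, Finset.mem_sdiff]; tauto)] at this
            obtain ⟨j, hj⟩ := h Xb hextD hfalse (Fin.cons B0 B)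
              (fun j j' hjj' => by
                rcases Fin.eq_zero_or_eq_succ j with rfl | ⟨j1, rfl⟩ <;>
                  rcases Fin.eq_zero_or_eq_succ j' with rfl | ⟨j2, rfl⟩
                · exact absurd rfl hjj'
                · rw [Fin.cons_zero, Fin.cons_succ]
                  exact ((hBD j2).mono_right
                    (hB0T.trans Finset.subset_union_right)).symm
                · rw [Fin.cons_zero, Fin.cons_succ]
                  exact (hBD j1).mono_right (hB0T.trans Finset.subset_union_right)
                · rw [Fin.cons_succ, Fin.cons_succ]
                  exact hBd j1 j2 (fun hc => hjj' (by rw [hc])))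
              (fun j => by
                rcases Fin.eq_zero_or_eq_succ j with rfl | ⟨j1, rfl⟩
                · rw [Fin.cons_zero]
                  exact Finset.disjoint_left.mpr (fun i hi hiD =>
                    (Finset.mem_sdiff.mp (hTdef ▸ hB0T hi)).2 hiD)
                · rw [Fin.cons_succ]
                  exact (hBD j1).mono_right Finset.subset_union_left)
            rcases Fin.eq_zero_or_eq_succ j with rfl | ⟨j1, rfl⟩
            · rw [Fin.cons_zero] at hj
              exact absurd hflip hj
            · rw [Fin.cons_succ] at hj
              exact ⟨j1, hj⟩
          have hq : ∀ W : Finset (Fin n), ∃ q : MvPolynomial (Fin n) ℝ,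
              (∀ i, q.degreeOf i ≤ 1) ∧ (∀ i ∈ D ∪ T, q.degreeOf i = 0) ∧
              q.totalDegree ≤ (m - 1) * c ∧
              ∀ Xb : Fin n → Bool,
                (∀ i ∈ D ∪ T, Xb i = (if i ∈ T then decide (i ∈ W) else v i)) →
                MvPolynomial.eval (chiR Xb) q = if f Xb then 1 else 0 :=
            fun W => ih (D ∪ T) _ (key W)
          choose q hq1 hq2 hq3 hq4 using hq
          refine ⟨∑ W ∈ T.powerset, indP T W * q W, ?_, ?_, ?_, ?_⟩
          · -- multilinear
            intro i
            refine mydegreeOf_sum_le i _ _ 1 (fun W _ => ?_)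
            refine le_trans (MvPolynomial.degreeOf_mul_le _ _ _) ?_
            by_cases hiT : i ∈ T
            · have h1 : MvPolynomial.degreeOf i (q W) = 0 :=
                hq2 W i (Finset.mem_union_right _ hiT)
              have h2 := degreeOf_indP_le i T W
              rw [if_pos hiT] at h2
              omega
            · have h2 := degreeOf_indP_le i T W
              rw [if_neg hiT] at h2
              have := hq1 W i
              omega
          · -- zero on D
            intro i hiD
            have hiT : i ∉ T := by rw [hTdef, Finset.mem_sdiff]; tauto
            have hle : MvPolynomial.degreeOf i (∑ W ∈ T.powerset, indP T W * q W) ≤ 0 := by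
              refine mydegreeOf_sum_le i _ _ 0 (fun W _ => ?_)
              refine le_trans (MvPolynomial.degreeOf_mul_le _ _ _) ?_
              have h1 : MvPolynomial.degreeOf i (q W) = 0 :=
                hq2 W i (Finset.mem_union_left _ hiD)
              have h2 := degreeOf_indP_le i T W
              rw [if_neg hiT] at h2
              omega
            omega
          · -- total degree
            refine le_trans (MvPolynomial.totalDegree_finset_sum _ _) ?_
            refine Finset.sup_le (fun W _ => ?_)
            refine le_trans (MvPolynomial.totalDegree_mul _ _) ?_
            have h1 := totalDegree_indP_le T W
            have h2 := hq3 W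
            have h3 : T.card ≤ c := le_trans (Finset.card_le_card (Finset.sdiff_subset)) hScard
            have : T.card + (m - 1) * c ≤ c + (m - 1) * c := by omega
            refine le_trans (Nat.add_le_add h1 h2) (le_trans this ?_)
            have : c + (m - 1) * c = ((m - 1) + 1) * c := by ring
            rw [this]
            have : (m - 1) + 1 = m := by omega
            rw [this]
            simp
          · -- evaluation
            intro Xb hext
            rw [map_sum]
            set WX := T.filter (fun i => Xb i = true) with hWXdef
            rw [Finset.sum_eq_single_of_mem WX
              (Finset.mem_powerset.mpr (Finset.filter_subset _ _))]
            · rw [map_mul]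
              have hone : MvPolynomial.eval (chiR Xb) (indP T WX) = 1 := by
                refine eval_indP_one Xb T WX (fun i hi => ?_)
                simp [hWXdef, hi]
              rw [hone, one_mul]
              refine hq4 WX Xb (fun i hiDT => ?_)
              by_cases hiT : i ∈ T
              · rw [if_pos hiT]
                by_cases hXbi : Xb i = true
                · rw [hXbi]
                  symm
                  simp [hWXdef, hiT, hXbi]
                · rw [Bool.not_eq_true] at hXbi
                  rw [hXbi]
                  symm
                  simp only [decide_eq_false_iff_not]
                  intro hc
                  rw [hWXdef, Finset.mem_filter] at hc
                  rw [hXbi] at hc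
                  exact Bool.false_ne_true hc.2
              · rw [if_neg hiT]
                have hiD : i ∈ D := by
                  rcases Finset.mem_union.mp hiDT with h' | h'
                  · exact h'
                  · exact absurd h' hiT
                exact hext i hiD
            · intro W hW hWne
              rw [map_mul]
              have : MvPolynomial.eval (chiR Xb) (indP T W) = 0 := by
                have hWsub : W ⊆ T := Finset.mem_powerset.mp hW
                by_contra hc
                apply hWne
                have hall : ∀ i ∈ T, (Xb i = true ↔ i ∈ W) := by
                  intro i hi
                  by_contra hcon
                  exact hc (eval_indP_zero Xb T W i hi hcon)
                ext i
                constructor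
                · intro hiW
                  rw [hWXdef, Finset.mem_filter]
                  exact ⟨hWsub hiW, (hall i (hWsub hiW)).mpr hiW⟩
                · intro hiWX
                  rw [hWXdef, Finset.mem_filter] at hiWX
                  exact (hall i hiWX.1).mp hiWX.2
              rw [this, zero_mul]
        · -- no false extension: f is constantly true on extensions
          refine ⟨MvPolynomial.C 1, ?_, ?_, ?_, ?_⟩
          · intro i; rw [MvPolynomial.degreeOf_C]; omega
          · intro i _; rw [MvPolynomial.degreeOf_C]
          · simp [MvPolynomial.totalDegree_C]
          · intro Xb hext
            have hft : f Xb = true := by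
              by_contra hf
              rw [Bool.not_eq_true] at hf
              exact hF ⟨Xb, hext, hf⟩
            simp [hft]
      · -- no true extension: f is constantly false on extensions
        refine ⟨MvPolynomial.C 0, ?_, ?_, ?_, ?_⟩
        · intro i; rw [MvPolynomial.degreeOf_C]; omega
        · intro i _; rw [MvPolynomial.degreeOf_C]
        · simp [MvPolynomial.totalDegree_C]
        · intro Xb hext
          have hft : f Xb = false := by
            by_contra hf
            rw [Bool.not_eq_false] at hf
            exact hT ⟨Xb, hext, hf⟩
          simp [hft]


/-- Beals–Buhrman–Cleve–Mosca–de Wolf: `deg(f) ≤ bs(f)³`. -/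
theorem bbcmw_degree_le_blockSens_cubed (n : ℕ) (f : (Fin n → Bool) → Bool)
    (p : MvPolynomial (Fin n) ℝ) (hml : Multilinear p) (hrep : Represents p f) :
    p.totalDegree ≤ blockSens f ^ 3 := by
  classical
  set b := blockSens f with hb
  have hhyp : ∀ Xb : Fin n → Bool, (∀ i ∈ (∅ : Finset (Fin n)), Xb i = false) →
      f Xb = false →
      ∀ B : Fin (b + 1) → Finset (Fin n), (∀ j j', j ≠ j' → Disjoint (B j) (B j')) →
      (∀ j, Disjoint (B j) (∅ : Finset (Fin n))) →
      ∃ j, f (flipBlock Xb (B j)) ≠ true := by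
    intro Xb _ hfalse B hd _
    by_contra hc
    push_neg at hc
    have hle := le_blockSens f Xb (b + 1) B hd (fun j => by
      rw [hc j, hfalse]; simp)
    omega
  obtain ⟨q, hq1, hq2, hq3, hq4⟩ :=
    construct f (b * b) (exists_certificate f) (b + 1) ∅ (fun _ => false) hhyp
  have hq3' : q.totalDegree ≤ b ^ 3 := by
    refine le_trans hq3 (le_of_eq ?_)
    have h1 : b + 1 - 1 = b := by omega
    rw [h1]
    ring
  have h0 : ∀ Xb : Fin n → Bool, MvPolynomial.eval (chiR Xb) (p - q) = 0 := by
    intro Xb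
    rw [map_sub]
    have h1 : MvPolynomial.eval (chiR Xb) p = if f Xb then 1 else 0 := hrep Xb
    have h2 := hq4 Xb (fun i hi => absurd hi (Finset.notMem_empty i))
    rw [h1, h2, sub_self]
  have hml' : ∀ i, (p - q).degreeOf i ≤ 1 := by
    intro i
    rw [MvPolynomial.degreeOf_le_iff]
    intro m hm
    rcases Finset.mem_union.mp (MvPolynomial.support_sub _ p q hm) with h1 | h1
    · exact (MvPolynomial.degreeOf_le_iff.mp (hml i)) m h1
    · exact (MvPolynomial.degreeOf_le_iff.mp (hq1 i)) m h1
  have hpq : p = q := sub_eq_zero.mp (ml_eq_zero (p - q) hml' h0)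
  rw [hpq]
  exact hq3'
end
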